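/- arXiv:1210.7515 — 4 statements merged into one kernel-verified Lean document; each statement's English description precedes it below -/
import Mathlib

section
/- Let q ≥ 3 be an odd integer and let n ≥ 2. There exists an (n,2)_q flash code that guarantees at least t = (n−1)(q−1) + ⌊(q−1)/2⌋ writes before a block erasure is required. -/
/-- `IsFlashCode D E` says that the pair of maps `(D, E)` forms an `(n,k)_q` flash code:
the all-zero cell-state vector decodes to the all-zero information vector, and whenever
the encoder succeeds, cell levels do not decrease, the written bit flips, and all other
bits are unchanged. -/
structure IsFlashCode {n k q : ℕ}
    (D : (Fin n → Fin q) → (Fin k → Bool))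
    (E : Fin k → (Fin n → Fin q) → Option (Fin n → Fin q)) : Prop where
  init : ∀ x : Fin n → Fin q, (∀ j, (x j : ℕ) = 0) → D x = fun _ => false
  mono : ∀ i x y, E i x = some y → ∀ j, x j ≤ y j
  flip : ∀ i x y, E i x = some y → D y i = ! D x i
  keep : ∀ i x y, E i x = some y → ∀ j, j ≠ i → D y j = D x j

/-- `CanWrite E x l` means the sequence of bit-writes `l` can be performed starting from
cell-state vector `x`, i.e. iteratively applying the encoder never produces `none`. -/
def CanWrite {n k q : ℕ} (E : Fin k → (Fin n → Fin q) → Option (Fin n → Fin q)) :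
    (Fin n → Fin q) → List (Fin k) → Prop
  | _, [] => True
  | x, i :: l => ∃ y, E i x = some y ∧ CanWrite E y l

/-- The code guarantees `t` writes: every sequence of at most `t` bit-writes, starting from
the all-zero cell-state vector, is accommodated without a block erasure. -/
def Guarantees {n k q : ℕ} (E : Fin k → (Fin n → Fin q) → Option (Fin n → Fin q))
    (t : ℕ) : Prop :=
  ∀ x : Fin n → Fin q, (∀ j, (x j : ℕ) = 0) →
    ∀ l : List (Fin k), l.length ≤ t → CanWrite E x l

namespace FlashAux

variable {n q : ℕ}

/-! ### helpers -/

lemma bflip {A B : ℕ} (hA : A < 2) (hB : B < 2) (h : A ≠ B) :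
    decide (A = 1) = !decide (B = 1) := by
  interval_cases A <;> interval_cases B <;> simp_all

lemma beqd {A B : ℕ} (h : A = B) : decide (A = 1) = decide (B = 1) := by rw [h]

lemma fin2_cases (i : Fin 2) : i = 0 ∨ i = 1 :=
  match i with
  | 0 => Or.inl rfl
  | 1 => Or.inr rfl

lemma fin2_one {j : Fin 2} (hj : j ≠ 0) : j = 1 := by fin_cases j <;> simp_all

lemma fin2_zero {j : Fin 2} (hj : j ≠ 1) : j = 0 := by fin_cases j <;> simp_all

/-! ### basic defs -/

def NFs (x : Fin n → Fin q) : Finset (Fin n) :=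
  Finset.univ.filter fun j => (x j : ℕ) + 2 ≤ q

lemma mem_NFs {x : Fin n → Fin q} {j : Fin n} : j ∈ NFs x ↔ (x j : ℕ) + 2 ≤ q := by
  simp [NFs]

def dec (x : Fin n → Fin q) : Fin 2 → Bool :=
  if h : 1 < (NFs x).card then
    fun i => if i = 0 then
      decide ((x ((NFs x).min' (Finset.card_pos.mp (by omega))) : ℕ) % 2 = 1)
    else
      decide ((x ((NFs x).max' (Finset.card_pos.mp (by omega))) : ℕ) % 2 = 1)
  else if h1 : (NFs x).Nonempty then
    fun i => if i = 0 then decide ((x ((NFs x).min' h1) : ℕ) % 2 = 1)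
    else decide ((x ((NFs x).min' h1) : ℕ) / 2 % 2 = 1)
  else fun i => if i = 0 then false else decide ((q - 1) / 2 % 2 = 1)

def upd (x : Fin n → Fin q) (j : Fin n) (v : ℕ) : Fin n → Fin q :=
  Function.update x j ⟨v % q, Nat.mod_lt _ (x j).pos⟩

lemma upd_self {x : Fin n → Fin q} {j : Fin n} {v : ℕ} (hv : v < q) :
    ((upd x j v) j : ℕ) = v := by
  simp [upd, Nat.mod_eq_of_lt hv]

lemma upd_other {x : Fin n → Fin q} {j j' : Fin n} {v : ℕ} (h : j' ≠ j) :
    upd x j v j' = x j' := Function.update_of_ne h _ _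

def enc (i : Fin 2) (x : Fin n → Fin q) : Option (Fin n → Fin q) :=
  if h : 1 < (NFs x).card then
    have hne : (NFs x).Nonempty := Finset.card_pos.mp (by omega)
    if i = 0 then
      if (x ((NFs x).min' hne) : ℕ) + 2 < q then
        some (upd x ((NFs x).min' hne) ((x ((NFs x).min' hne) : ℕ) + 1))
      else if (NFs x).card = 2 then
        some (upd (upd x ((NFs x).min' hne) ((x ((NFs x).min' hne) : ℕ) + 1))
          ((NFs x).max' hne)
          ((x ((NFs x).max' hne) : ℕ) + (x ((NFs x).max' hne) : ℕ) % 4))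
      else some (upd x ((NFs x).min' hne) ((x ((NFs x).min' hne) : ℕ) + 1))
    else
      if (x ((NFs x).max' hne) : ℕ) + 2 < q then
        some (upd x ((NFs x).max' hne) ((x ((NFs x).max' hne) : ℕ) + 1))
      else if (NFs x).card = 2 then
        some (upd (upd x ((NFs x).max' hne) ((x ((NFs x).max' hne) : ℕ) + 1))
          ((NFs x).min' hne)
          ((x ((NFs x).min' hne) : ℕ) +
            (if (x ((NFs x).min' hne) : ℕ) / 2 % 2 = 0 then 0 else 2)))
      else some (upd x ((NFs x).max' hne) ((x ((NFs x).max' hne) : ℕ) + 1))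
  else if h1 : (NFs x).Nonempty then
    if i = 0 then
      some (upd x ((NFs x).min' h1)
        ((x ((NFs x).min' h1) : ℕ) + (if (x ((NFs x).min' h1) : ℕ) % 2 = 0 then 1 else 3)))
    else some (upd x ((NFs x).min' h1) ((x ((NFs x).min' h1) : ℕ) + 2))
  else none

lemma enc_big {i : Fin 2} {x : Fin n → Fin q} (hcard : 1 < (NFs x).card)
    (hne : (NFs x).Nonempty) :
    enc i x =
    (if i = 0 then
      if (x ((NFs x).min' hne) : ℕ) + 2 < q then
        some (upd x ((NFs x).min' hne) ((x ((NFs x).min' hne) : ℕ) + 1))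
      else if (NFs x).card = 2 then
        some (upd (upd x ((NFs x).min' hne) ((x ((NFs x).min' hne) : ℕ) + 1))
          ((NFs x).max' hne)
          ((x ((NFs x).max' hne) : ℕ) + (x ((NFs x).max' hne) : ℕ) % 4))
      else some (upd x ((NFs x).min' hne) ((x ((NFs x).min' hne) : ℕ) + 1))
    else
      if (x ((NFs x).max' hne) : ℕ) + 2 < q then
        some (upd x ((NFs x).max' hne) ((x ((NFs x).max' hne) : ℕ) + 1))
      else if (NFs x).card = 2 then
        some (upd (upd x ((NFs x).max' hne) ((x ((NFs x).max' hne) : ℕ) + 1))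
          ((NFs x).min' hne)
          ((x ((NFs x).min' hne) : ℕ) +
            (if (x ((NFs x).min' hne) : ℕ) / 2 % 2 = 0 then 0 else 2)))
      else some (upd x ((NFs x).max' hne) ((x ((NFs x).max' hne) : ℕ) + 1))) := by
  unfold enc
  rw [dif_pos hcard]

lemma enc_small {i : Fin 2} {x : Fin n → Fin q} (hcard : ¬ 1 < (NFs x).card)
    (hne : (NFs x).Nonempty) :
    enc i x =
    (if i = 0 then
      some (upd x ((NFs x).min' hne)
        ((x ((NFs x).min' hne) : ℕ) + (if (x ((NFs x).min' hne) : ℕ) % 2 = 0 then 1 else 3)))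
    else some (upd x ((NFs x).min' hne) ((x ((NFs x).min' hne) : ℕ) + 2))) := by
  unfold enc
  rw [dif_neg hcard, dif_pos hne]

def E (i : Fin 2) (x : Fin n → Fin q) : Option (Fin n → Fin q) :=
  match enc i x with
  | none => none
  | some y =>
    if (∀ j, x j ≤ y j) ∧ dec y i = !dec x i ∧ (∀ j, j ≠ i → dec y j = dec x j)
    then some y else none

lemma E_eq_some {i : Fin 2} {x y : Fin n → Fin q} :
    E i x = some y ↔ enc i x = some y ∧ (∀ j, x j ≤ y j) ∧ dec y i = !dec x i ∧
      (∀ j, j ≠ i → dec y j = dec x j) := by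
  unfold E
  cases h : enc i x with
  | none => simp
  | some z =>
    simp only []
    split_ifs with hc
    · constructor
      · rintro h'; obtain rfl : z = y := by simpa using h'
        exact ⟨rfl, hc.1, hc.2.1, hc.2.2⟩
      · rintro ⟨h1, _⟩; obtain rfl : z = y := by simpa using h1
        rfl
    · constructor
      · rintro h'; simp at h'
      · rintro ⟨h1, h2, h3, h4⟩; obtain rfl : z = y := by simpa using h1
        exact absurd ⟨h2, h3, h4⟩ hc

/-! ### shapes -/

def Sh1 (x : Fin n → Fin q) (l r : Fin n) : Prop :=
  l < r ∧ (x l : ℕ) + 2 ≤ q ∧ (x r : ℕ) + 2 ≤ q ∧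
  (∀ j, j < l → (x j : ℕ) + 1 = q) ∧ (∀ j, r < j → (x j : ℕ) + 1 = q) ∧
  (∀ j, l < j → j < r → (x j : ℕ) = 0)

def ShL (x : Fin n → Fin q) (c : Fin n) : Prop :=
  (x c : ℕ) + 2 ≤ q ∧ ∀ j, j ≠ c → (x j : ℕ) + 1 = q

def ShF (x : Fin n → Fin q) : Prop := ∀ j, (x j : ℕ) + 1 = q

lemma NFs_Sh1 (hq : 3 ≤ q) {x : Fin n → Fin q} {l r : Fin n} (h : Sh1 x l r) :
    NFs x = Finset.Icc l r := by
  obtain ⟨hlr, hl, hr, hfl, hfr, hint⟩ := h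
  ext j
  simp only [mem_NFs, Finset.mem_Icc]
  constructor
  · intro hj
    constructor
    · by_contra hc
      have := hfl j (lt_of_not_ge hc)
      omega
    · by_contra hc
      have := hfr j (lt_of_not_ge hc)
      omega
  · rintro ⟨h1, h2⟩
    rcases eq_or_lt_of_le h1 with rfl | h1'
    · exact hl
    rcases eq_or_lt_of_le h2 with rfl | h2'
    · exact hr
    have := hint j h1' h2'
    omega

lemma min'_Sh1 {x : Fin n → Fin q} {l r : Fin n} (h : Sh1 x l r)
    (hne : (NFs x).Nonempty) : (NFs x).min' hne = l := by
  obtain ⟨hlr, hl, hr, hfl, hfr, hint⟩ := h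
  apply le_antisymm
  · exact Finset.min'_le _ _ (mem_NFs.mpr hl)
  · apply Finset.le_min'
    intro y hy
    by_contra hc
    have := hfl y (lt_of_not_ge hc)
    have := mem_NFs.mp hy
    omega

lemma max'_Sh1 {x : Fin n → Fin q} {l r : Fin n} (h : Sh1 x l r)
    (hne : (NFs x).Nonempty) : (NFs x).max' hne = r := by
  obtain ⟨hlr, hl, hr, hfl, hfr, hint⟩ := h
  apply le_antisymm
  · apply Finset.max'_le
    intro y hy
    by_contra hc
    have := hfr y (lt_of_not_ge hc)
    have := mem_NFs.mp hy
    omega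
  · exact Finset.le_max' _ _ (mem_NFs.mpr hr)

lemma card_Sh1 (hq : 3 ≤ q) {x : Fin n → Fin q} {l r : Fin n} (h : Sh1 x l r) :
    (NFs x).card = (r : ℕ) + 1 - l := by
  rw [NFs_Sh1 hq h, Fin.card_Icc]

lemma one_lt_card_Sh1 (hq : 3 ≤ q) {x : Fin n → Fin q} {l r : Fin n} (h : Sh1 x l r) :
    1 < (NFs x).card := by
  rw [card_Sh1 hq h]
  have := h.1
  rw [Fin.lt_def] at this
  omega

lemma dec_Sh1 (hq : 3 ≤ q) {x : Fin n → Fin q} {l r : Fin n} (h : Sh1 x l r) :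
    dec x 0 = decide ((x l : ℕ) % 2 = 1) ∧ dec x 1 = decide ((x r : ℕ) % 2 = 1) := by
  have hc := one_lt_card_Sh1 hq h
  have hne : (NFs x).Nonempty := Finset.card_pos.mp (by omega)
  unfold dec
  rw [dif_pos hc]
  rw [min'_Sh1 h, max'_Sh1 h]
  simp

lemma NFs_ShL {x : Fin n → Fin q} {c : Fin n} (h : ShL x c) : NFs x = {c} := by
  ext j
  simp only [mem_NFs, Finset.mem_singleton]
  constructor
  · intro hj
    by_contra hc
    have := h.2 j hc
    omega
  · rintro rfl; exact h.1

lemma min'_ShL {x : Fin n → Fin q} {c : Fin n} (h : ShL x c)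
    (hne : (NFs x).Nonempty) : (NFs x).min' hne = c := by
  have hsub : NFs x ⊆ {c} := (NFs_ShL h).le
  have := hsub (Finset.min'_mem _ hne)
  simpa using this

lemma dec_ShL {x : Fin n → Fin q} {c : Fin n} (h : ShL x c) :
    dec x 0 = decide ((x c : ℕ) % 2 = 1) ∧ dec x 1 = decide ((x c : ℕ) / 2 % 2 = 1) := by
  have hs := NFs_ShL h
  have hcard : (NFs x).card = 1 := by rw [hs]; simp
  have hne : (NFs x).Nonempty := by rw [hs]; exact ⟨c, by simp⟩
  unfold dec
  rw [dif_neg (by omega), dif_pos hne, min'_ShL h]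
  simp

lemma NFs_ShF {x : Fin n → Fin q} (h : ShF x) : NFs x = ∅ := by
  ext j
  simp only [mem_NFs, Finset.notMem_empty, iff_false]
  have := h j
  omega

lemma dec_ShF {x : Fin n → Fin q} (h : ShF x) :
    dec x 0 = false ∧ dec x 1 = decide ((q - 1) / 2 % 2 = 1) := by
  have hs := NFs_ShF h
  unfold dec
  rw [dif_neg (by rw [hs]; simp), dif_neg (by rw [hs]; simp)]
  simp

/-! ### free capacity -/

def sumFree (x : Fin n → Fin q) : ℕ := ∑ j, (q - 1 - (x j : ℕ))

lemma sumFree_upd {x : Fin n → Fin q} {j : Fin n} {v : ℕ} (hv : v < q) :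
    sumFree (upd x j v) + (q - 1 - (x j : ℕ)) = sumFree x + (q - 1 - v) := by
  have hfun : (fun j' => q - 1 - ((upd x j v) j' : ℕ)) =
      Function.update (fun j' => q - 1 - (x j' : ℕ)) j (q - 1 - v) := by
    funext j'
    rcases eq_or_ne j' j with rfl | hne
    · simp [upd_self hv, Function.update_self]
    · rw [upd_other hne, Function.update_of_ne hne]
  have h1 : sumFree (upd x j v) = (q - 1 - v) + ∑ j' ∈ Finset.univ.erase j,
      (q - 1 - (x j' : ℕ)) := by
    unfold sumFree
    rw [Finset.sum_congr rfl (fun j' _ => congrFun hfun j')]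
    rw [Finset.sum_update_of_mem (Finset.mem_univ j)]
    rw [Finset.sdiff_singleton_eq_erase]
  have h2 : (q - 1 - (x j : ℕ)) + ∑ j' ∈ Finset.univ.erase j, (q - 1 - (x j' : ℕ))
      = sumFree x := by
    unfold sumFree
    exact Finset.add_sum_erase _ (fun j' => q - 1 - (x j' : ℕ)) (Finset.mem_univ j)
  omega

lemma sumFree_ShL {x : Fin n → Fin q} {c : Fin n} (h : ShL x c) :
    sumFree x = q - 1 - (x c : ℕ) := by
  unfold sumFree
  rw [Finset.sum_eq_single_of_mem c (Finset.mem_univ c)]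
  intro j _ hj
  have := h.2 j hj
  omega

lemma sumFree_pair {x : Fin n → Fin q} {l r : Fin n} (hlr : l ≠ r)
    (hfull : ∀ j, j ≠ l → j ≠ r → (x j : ℕ) + 1 = q) :
    sumFree x = (q - 1 - (x l : ℕ)) + (q - 1 - (x r : ℕ)) := by
  unfold sumFree
  have h1 : (q - 1 - (x l : ℕ)) + ∑ j' ∈ Finset.univ.erase l, (q - 1 - (x j' : ℕ))
      = ∑ j', (q - 1 - (x j' : ℕ)) :=
    Finset.add_sum_erase _ (fun j' => q - 1 - (x j' : ℕ)) (Finset.mem_univ l)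
  have hrmem : r ∈ Finset.univ.erase l := by
    simp only [Finset.mem_erase, Finset.mem_univ, and_true]
    exact fun h => hlr h.symm
  have h2 : (q - 1 - (x r : ℕ)) + ∑ j' ∈ (Finset.univ.erase l).erase r,
      (q - 1 - (x j' : ℕ)) = ∑ j' ∈ Finset.univ.erase l, (q - 1 - (x j' : ℕ)) :=
    Finset.add_sum_erase _ (fun j' => q - 1 - (x j' : ℕ)) hrmem
  have h3 : ∑ j' ∈ (Finset.univ.erase l).erase r, (q - 1 - (x j' : ℕ)) = 0 := by
    apply Finset.sum_eq_zero
    intro j hj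
    simp only [Finset.mem_erase] at hj
    have := hfull j hj.2.1 hj.1
    omega
  omega

/-! ### invariant -/

def Inv (w : ℕ) (x : Fin n → Fin q) : Prop :=
  (∃ l r, Sh1 x l r ∧ 2 * w + (q - 1) ≤ 2 * sumFree x) ∨
  (∃ c, ShL x c ∧ 2 * w + (x c : ℕ) % 2 ≤ sumFree x) ∨
  (ShF x ∧ w = 0)

/-! ### step lemma: single-cell phase -/

lemma step_line (hq : 3 ≤ q) (hodd : q % 2 = 1) {w : ℕ} {x : Fin n → Fin q} {c : Fin n}
    (hsh : ShL x c) (hbud : 2 * (w + 1) + (x c : ℕ) % 2 ≤ sumFree x) (i : Fin 2) :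
    ∃ y, enc i x = some y ∧ (∀ j, x j ≤ y j) ∧ dec y i = !dec x i ∧
      (∀ j, j ≠ i → dec y j = dec x j) ∧ Inv w y := by
  have hS := sumFree_ShL hsh
  have hv2 : (x c : ℕ) + 2 ≤ q := hsh.1
  have hcard : (NFs x).card = 1 := by rw [NFs_ShL hsh]; simp
  have hne : (NFs x).Nonempty := by rw [NFs_ShL hsh]; exact ⟨c, by simp⟩
  have hdx := dec_ShL hsh
  rw [hS] at hbud
  have henc0 := enc_small (i := i) (x := x) (by omega) hne
  rw [min'_ShL hsh] at henc0
  -- abbreviation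
  have hvq : (x c : ℕ) + 1 < q := by omega
  rcases fin2_cases i with rfl | rfl
  · -- bit 0
    rw [if_pos rfl] at henc0
    by_cases hpar : (x c : ℕ) % 2 = 0
    · -- even level: +1
      rw [if_pos hpar] at henc0
      have hstep : (x c : ℕ) + 3 ≤ q := by omega
      have hyc : ((upd x c ((x c : ℕ) + 1)) c : ℕ) = (x c : ℕ) + 1 := upd_self (by omega)
      have hshy : ShL (upd x c ((x c : ℕ) + 1)) c := by
        refine ⟨by omega, fun j hj => ?_⟩
        rw [upd_other hj]; exact hsh.2 j hj
      have hdy := dec_ShL hshy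
      rw [hyc] at hdy
      refine ⟨_, henc0, ?_, ?_, ?_, ?_⟩
      · intro j
        rcases eq_or_ne j c with rfl | hj
        · rw [Fin.le_def, hyc]; omega
        · rw [upd_other hj]
      · rw [hdy.1, hdx.1]
        exact bflip (by omega) (by omega) (by omega)
      · intro j hj
        rw [fin2_one hj, hdy.2, hdx.2]
        exact beqd (by omega)
      · refine Or.inr (Or.inl ⟨c, hshy, ?_⟩)
        rw [sumFree_ShL hshy, hyc]
        omega
    · -- odd level: +3
      rw [if_neg hpar] at henc0
      have hpar1 : (x c : ℕ) % 2 = 1 := by omega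
      have hstep : (x c : ℕ) + 4 ≤ q := by omega
      have hyc : ((upd x c ((x c : ℕ) + 3)) c : ℕ) = (x c : ℕ) + 3 := upd_self (by omega)
      have hmono : ∀ j, x j ≤ (upd x c ((x c : ℕ) + 3)) j := by
        intro j
        rcases eq_or_ne j c with rfl | hj
        · rw [Fin.le_def, hyc]; omega
        · rw [upd_other hj]
      by_cases hfull : (x c : ℕ) + 4 = q
      · -- lands full
        have hshy : ShF (upd x c ((x c : ℕ) + 3)) := by
          intro j
          rcases eq_or_ne j c with rfl | hj
          · rw [hyc]; omega
          · rw [upd_other hj]; exact hsh.2 j hj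
        have hdy := dec_ShF hshy
        refine ⟨_, henc0, hmono, ?_, ?_, ?_⟩
        · rw [hdy.1, hdx.1, hpar1]; simp
        · intro j hj
          rw [fin2_one hj, hdy.2, hdx.2]
          exact beqd (by omega)
        · refine Or.inr (Or.inr ⟨hshy, by omega⟩)
      · -- stays single-cell
        have hshy : ShL (upd x c ((x c : ℕ) + 3)) c := by
          refine ⟨by omega, fun j hj => ?_⟩
          rw [upd_other hj]; exact hsh.2 j hj
        have hdy := dec_ShL hshy
        rw [hyc] at hdy
        refine ⟨_, henc0, hmono, ?_, ?_, ?_⟩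
        · rw [hdy.1, hdx.1]
          exact bflip (by omega) (by omega) (by omega)
        · intro j hj
          rw [fin2_one hj, hdy.2, hdx.2]
          exact beqd (by omega)
        · refine Or.inr (Or.inl ⟨c, hshy, ?_⟩)
          rw [sumFree_ShL hshy, hyc]
          omega
  · -- bit 1 : +2
    rw [if_neg (by decide)] at henc0
    have hstep : (x c : ℕ) + 3 ≤ q := by omega
    have hyc : ((upd x c ((x c : ℕ) + 2)) c : ℕ) = (x c : ℕ) + 2 := upd_self (by omega)
    have hmono : ∀ j, x j ≤ (upd x c ((x c : ℕ) + 2)) j := by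
      intro j
      rcases eq_or_ne j c with rfl | hj
      · rw [Fin.le_def, hyc]; omega
      · rw [upd_other hj]
    by_cases hfull : (x c : ℕ) + 3 = q
    · -- lands full
      have hpar0 : (x c : ℕ) % 2 = 0 := by omega
      have hshy : ShF (upd x c ((x c : ℕ) + 2)) := by
        intro j
        rcases eq_or_ne j c with rfl | hj
        · rw [hyc]; omega
        · rw [upd_other hj]; exact hsh.2 j hj
      have hdy := dec_ShF hshy
      refine ⟨_, henc0, hmono, ?_, ?_, ?_⟩
      · rw [hdy.2, hdx.2]
        exact bflip (by omega) (by omega) (by omega)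
      · intro j hj
        rw [fin2_zero hj, hdy.1, hdx.1, hpar0]; simp
      · refine Or.inr (Or.inr ⟨hshy, by omega⟩)
    · -- stays single-cell
      have hshy : ShL (upd x c ((x c : ℕ) + 2)) c := by
        refine ⟨by omega, fun j hj => ?_⟩
        rw [upd_other hj]; exact hsh.2 j hj
      have hdy := dec_ShL hshy
      rw [hyc] at hdy
      refine ⟨_, henc0, hmono, ?_, ?_, ?_⟩
      · rw [hdy.2, hdx.2]
        exact bflip (by omega) (by omega) (by omega)
      · intro j hj
        rw [fin2_zero hj, hdy.1, hdx.1]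
        exact beqd (by omega)
      · refine Or.inr (Or.inl ⟨c, hshy, ?_⟩)
        rw [sumFree_ShL hshy, hyc]
        omega

/-! ### step lemma: two-pointer phase -/

lemma step_sh1 (hq : 3 ≤ q) (hodd : q % 2 = 1) {w : ℕ} {x : Fin n → Fin q} {l r : Fin n}
    (hsh : Sh1 x l r) (hbud : 2 * (w + 1) + (q - 1) ≤ 2 * sumFree x) (i : Fin 2) :
    ∃ y, enc i x = some y ∧ (∀ j, x j ≤ y j) ∧ dec y i = !dec x i ∧
      (∀ j, j ≠ i → dec y j = dec x j) ∧ Inv w y := by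
  obtain ⟨hlr, hxl, hxr, hfl, hfr, hint⟩ := id hsh
  have hlrv : (l : ℕ) < r := Fin.lt_def.mp hlr
  have hlr' : l ≠ r := ne_of_lt hlr
  have hcard1 := one_lt_card_Sh1 hq hsh
  have hne : (NFs x).Nonempty := Finset.card_pos.mp (by omega)
  have hdx := dec_Sh1 hq hsh
  have henc := enc_big (i := i) hcard1 hne
  rw [min'_Sh1 hsh, max'_Sh1 hsh] at henc
  have hcs := card_Sh1 hq hsh
  rcases fin2_cases i with rfl | rfl
  · -- bit 0
    rw [if_pos rfl] at henc
    by_cases hsat : (x l : ℕ) + 2 < q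
    · -- non-saturating
      rw [if_pos hsat] at henc
      have hyl : ((upd x l ((x l : ℕ) + 1)) l : ℕ) = (x l : ℕ) + 1 := upd_self (by omega)
      have hshy : Sh1 (upd x l ((x l : ℕ) + 1)) l r := by
        refine ⟨hlr, by rw [hyl]; omega, ?_, ?_, ?_, ?_⟩
        · rw [upd_other (Ne.symm hlr')]; exact hxr
        · intro j hj
          rw [upd_other (ne_of_lt hj)]; exact hfl j hj
        · intro j hj
          rw [upd_other (Ne.symm (ne_of_lt (lt_trans hlr hj)))]; exact hfr j hj
        · intro j hj1 hj2
          rw [upd_other (Ne.symm (ne_of_lt hj1))]; exact hint j hj1 hj2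
      have hdy := dec_Sh1 hq hshy
      have hyr : (upd x l ((x l : ℕ) + 1)) r = x r := upd_other (Ne.symm hlr')
      refine ⟨_, henc, ?_, ?_, ?_, ?_⟩
      · intro j
        rcases eq_or_ne j l with rfl | hj
        · rw [Fin.le_def, hyl]; omega
        · rw [upd_other hj]
      · rw [hdy.1, hdx.1, hyl]
        exact bflip (by omega) (by omega) (by omega)
      · intro j hj
        rw [fin2_one hj, hdy.2, hdx.2, hyr]
      · refine Or.inl ⟨l, r, hshy, ?_⟩
        have hsf := sumFree_upd (x := x) (j := l) (v := (x l : ℕ) + 1) (by omega)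
        omega
    · -- saturating
      have hsate : (x l : ℕ) + 2 = q := by omega
      have hlodd : (x l : ℕ) % 2 = 1 := by omega
      rw [if_neg hsat] at henc
      by_cases h2 : (NFs x).card = 2
      · -- entry into single-cell phase, survivor r
        rw [if_pos h2] at henc
        have hrl : (r : ℕ) = (l : ℕ) + 1 := by omega
        have hpairfull : ∀ j, j ≠ l → j ≠ r → (x j : ℕ) + 1 = q := by
          intro j hjl hjr
          have hjlv : (j : ℕ) ≠ (l : ℕ) := fun h => hjl (Fin.ext h)
          have hjrv : (j : ℕ) ≠ (r : ℕ) := fun h => hjr (Fin.ext h)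
          rcases lt_or_gt_of_ne hjlv with h' | h'
          · exact hfl j (Fin.lt_def.mpr h')
          · exact hfr j (Fin.lt_def.mpr (by omega))
        have hSx : sumFree x = (q - 1 - (x l : ℕ)) + (q - 1 - (x r : ℕ)) :=
          sumFree_pair hlr' hpairfull
        have hb2 : 2 * (w + 1) + (q - 1) ≤
            2 * ((q - 1 - (x l : ℕ)) + (q - 1 - (x r : ℕ))) := by rw [← hSx]; exact hbud
        have hkey : 2 * w + 2 * (x r : ℕ) + 1 ≤ q := by omega
        have hv'q : (x r : ℕ) + (x r : ℕ) % 4 < q := by omega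
        have hyl : ((upd (upd x l ((x l : ℕ) + 1)) r ((x r : ℕ) + (x r : ℕ) % 4)) l : ℕ)
            = (x l : ℕ) + 1 := by
          rw [upd_other hlr']; exact upd_self (by omega)
        have hyr : ((upd (upd x l ((x l : ℕ) + 1)) r ((x r : ℕ) + (x r : ℕ) % 4)) r : ℕ)
            = (x r : ℕ) + (x r : ℕ) % 4 := upd_self hv'q
        have hyo : ∀ j, j ≠ l → j ≠ r →
            (upd (upd x l ((x l : ℕ) + 1)) r ((x r : ℕ) + (x r : ℕ) % 4)) j = x j := by
          intro j hjl hjr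
          rw [upd_other hjr, upd_other hjl]
        have hmono : ∀ j, x j ≤ (upd (upd x l ((x l : ℕ) + 1)) r
            ((x r : ℕ) + (x r : ℕ) % 4)) j := by
          intro j
          rcases eq_or_ne j l with rfl | hjl
          · rw [Fin.le_def, hyl]; omega
          rcases eq_or_ne j r with rfl | hjr
          · rw [Fin.le_def, hyr]; omega
          · rw [hyo j hjl hjr]
        by_cases hfullv : (x r : ℕ) + (x r : ℕ) % 4 + 1 = q
        · -- lands completely full
          have hshy : ShF (upd (upd x l ((x l : ℕ) + 1)) r ((x r : ℕ) + (x r : ℕ) % 4)) := by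
            intro j
            rcases eq_or_ne j l with rfl | hjl
            · rw [hyl]; omega
            rcases eq_or_ne j r with rfl | hjr
            · rw [hyr]; omega
            · rw [hyo j hjl hjr]; exact hpairfull j hjl hjr
          have hdy := dec_ShF hshy
          refine ⟨_, henc, hmono, ?_, ?_, ?_⟩
          · rw [hdy.1, hdx.1, hlodd]; simp
          · intro j hj
            rw [fin2_one hj, hdy.2, hdx.2]
            exact beqd (by omega)
          · exact Or.inr (Or.inr ⟨hshy, by omega⟩)
        · -- single cell r
          have hshy : ShL (upd (upd x l ((x l : ℕ) + 1)) r ((x r : ℕ) + (x r : ℕ) % 4)) r := by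
            refine ⟨by rw [hyr]; omega, fun j hj => ?_⟩
            rcases eq_or_ne j l with rfl | hjl
            · rw [hyl]; omega
            · rw [hyo j hjl hj]; exact hpairfull j hjl hj
          have hdy := dec_ShL hshy
          rw [hyr] at hdy
          refine ⟨_, henc, hmono, ?_, ?_, ?_⟩
          · rw [hdy.1, hdx.1]
            exact bflip (by omega) (by omega) (by omega)
          · intro j hj
            rw [fin2_one hj, hdy.2, hdx.2]
            exact beqd (by omega)
          · refine Or.inr (Or.inl ⟨r, hshy, ?_⟩)
            rw [sumFree_ShL hshy, hyr]
            omega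
      · -- saturating, at least three non-full cells remain
        rw [if_neg h2] at henc
        have hrl2 : (l : ℕ) + 2 ≤ (r : ℕ) := by omega
        have hlt : (l : ℕ) + 1 < n := by have := r.isLt; omega
        have hll'v : ((⟨(l : ℕ) + 1, hlt⟩ : Fin n) : ℕ) = (l : ℕ) + 1 := rfl
        have hll' : l < (⟨(l : ℕ) + 1, hlt⟩ : Fin n) := Fin.lt_def.mpr (by omega)
        have hl'r : (⟨(l : ℕ) + 1, hlt⟩ : Fin n) < r := Fin.lt_def.mpr (by omega)
        have hxl' : (x ⟨(l : ℕ) + 1, hlt⟩ : ℕ) = 0 := hint _ hll' hl'r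
        have hyl : ((upd x l ((x l : ℕ) + 1)) l : ℕ) = (x l : ℕ) + 1 := upd_self (by omega)
        have hyl' : ((upd x l ((x l : ℕ) + 1)) ⟨(l : ℕ) + 1, hlt⟩ : ℕ) = 0 := by
          rw [upd_other (Ne.symm (ne_of_lt hll'))]; exact hxl'
        have hyr : (upd x l ((x l : ℕ) + 1)) r = x r := upd_other (Ne.symm hlr')
        have hshy : Sh1 (upd x l ((x l : ℕ) + 1)) ⟨(l : ℕ) + 1, hlt⟩ r := by
          refine ⟨hl'r, by rw [hyl']; omega, by rw [hyr]; exact hxr, ?_, ?_, ?_⟩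
          · intro j hj
            have hjv : (j : ℕ) < (l : ℕ) + 1 := Fin.lt_def.mp hj
            rcases eq_or_ne j l with rfl | hjl
            · rw [hyl]; omega
            · have : j < l := Fin.lt_def.mpr (by
                have : (j : ℕ) ≠ (l : ℕ) := fun h => hjl (Fin.ext h)
                omega)
              rw [upd_other hjl]; exact hfl j this
          · intro j hj
            rw [upd_other (Ne.symm (ne_of_lt (lt_trans hlr hj)))]; exact hfr j hj
          · intro j hj1 hj2
            have : l < j := lt_trans hll' hj1
            rw [upd_other (Ne.symm (ne_of_lt this))]
            exact hint j this hj2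
        have hdy := dec_Sh1 hq hshy
        refine ⟨_, henc, ?_, ?_, ?_, ?_⟩
        · intro j
          rcases eq_or_ne j l with rfl | hj
          · rw [Fin.le_def, hyl]; omega
          · rw [upd_other hj]
        · rw [hdy.1, hdx.1, hyl']
          exact bflip (by omega) (by omega) (by omega)
        · intro j hj
          rw [fin2_one hj, hdy.2, hdx.2, hyr]
        · refine Or.inl ⟨_, r, hshy, ?_⟩
          have hsf := sumFree_upd (x := x) (j := l) (v := (x l : ℕ) + 1) (by omega)
          omega
  · -- bit 1
    rw [if_neg (by decide)] at henc
    by_cases hsat : (x r : ℕ) + 2 < q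
    · -- non-saturating
      rw [if_pos hsat] at henc
      have hyr : ((upd x r ((x r : ℕ) + 1)) r : ℕ) = (x r : ℕ) + 1 := upd_self (by omega)
      have hyl : (upd x r ((x r : ℕ) + 1)) l = x l := upd_other hlr'
      have hshy : Sh1 (upd x r ((x r : ℕ) + 1)) l r := by
        refine ⟨hlr, by rw [hyl]; exact hxl, by rw [hyr]; omega, ?_, ?_, ?_⟩
        · intro j hj
          rw [upd_other (ne_of_lt (lt_trans hj hlr))]; exact hfl j hj
        · intro j hj
          rw [upd_other (Ne.symm (ne_of_lt hj))]; exact hfr j hj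
        · intro j hj1 hj2
          rw [upd_other (ne_of_lt hj2)]; exact hint j hj1 hj2
      have hdy := dec_Sh1 hq hshy
      refine ⟨_, henc, ?_, ?_, ?_, ?_⟩
      · intro j
        rcases eq_or_ne j r with rfl | hj
        · rw [Fin.le_def, hyr]; omega
        · rw [upd_other hj]
      · rw [hdy.2, hdx.2, hyr]
        exact bflip (by omega) (by omega) (by omega)
      · intro j hj
        rw [fin2_zero hj, hdy.1, hdx.1, hyl]
      · refine Or.inl ⟨l, r, hshy, ?_⟩
        have hsf := sumFree_upd (x := x) (j := r) (v := (x r : ℕ) + 1) (by omega)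
        omega
    · -- saturating
      have hsate : (x r : ℕ) + 2 = q := by omega
      have hrodd : (x r : ℕ) % 2 = 1 := by omega
      rw [if_neg hsat] at henc
      by_cases h2 : (NFs x).card = 2
      · -- entry into single-cell phase, survivor l
        rw [if_pos h2] at henc
        have hrl : (r : ℕ) = (l : ℕ) + 1 := by omega
        have hpairfull : ∀ j, j ≠ l → j ≠ r → (x j : ℕ) + 1 = q := by
          intro j hjl hjr
          have hjlv : (j : ℕ) ≠ (l : ℕ) := fun h => hjl (Fin.ext h)
          have hjrv : (j : ℕ) ≠ (r : ℕ) := fun h => hjr (Fin.ext h)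
          rcases lt_or_gt_of_ne hjlv with h' | h'
          · exact hfl j (Fin.lt_def.mpr h')
          · exact hfr j (Fin.lt_def.mpr (by omega))
        have hSx : sumFree x = (q - 1 - (x l : ℕ)) + (q - 1 - (x r : ℕ)) :=
          sumFree_pair hlr' hpairfull
        have hb2 : 2 * (w + 1) + (q - 1) ≤
            2 * ((q - 1 - (x l : ℕ)) + (q - 1 - (x r : ℕ))) := by rw [← hSx]; exact hbud
        have hkey : 2 * w + 2 * (x l : ℕ) + 1 ≤ q := by omega
        by_cases hd : (x l : ℕ) / 2 % 2 = 0
        · -- no bump needed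
          rw [if_pos hd] at henc
          have hv'q : (x l : ℕ) + 0 < q := by omega
          have hyr : ((upd (upd x r ((x r : ℕ) + 1)) l ((x l : ℕ) + 0)) r : ℕ)
              = (x r : ℕ) + 1 := by
            rw [upd_other (Ne.symm hlr')]; exact upd_self (by omega)
          have hyl : ((upd (upd x r ((x r : ℕ) + 1)) l ((x l : ℕ) + 0)) l : ℕ)
              = (x l : ℕ) := by
            have := upd_self (x := upd x r ((x r : ℕ) + 1)) (j := l)
              (v := (x l : ℕ) + 0) (by omega)
            omega
          have hyo : ∀ j, j ≠ l → j ≠ r →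
              (upd (upd x r ((x r : ℕ) + 1)) l ((x l : ℕ) + 0)) j = x j := by
            intro j hjl hjr
            rw [upd_other hjl, upd_other hjr]
          have hmono : ∀ j, x j ≤ (upd (upd x r ((x r : ℕ) + 1)) l ((x l : ℕ) + 0)) j := by
            intro j
            rcases eq_or_ne j l with rfl | hjl
            · rw [Fin.le_def, hyl]
            rcases eq_or_ne j r with rfl | hjr
            · rw [Fin.le_def, hyr]; omega
            · rw [hyo j hjl hjr]
          by_cases hfullv : (x l : ℕ) + 1 = q
          · -- survivor was itself almost full
            have hshy : ShF (upd (upd x r ((x r : ℕ) + 1)) l ((x l : ℕ) + 0)) := by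
              intro j
              rcases eq_or_ne j l with rfl | hjl
              · rw [hyl]; omega
              rcases eq_or_ne j r with rfl | hjr
              · rw [hyr]; omega
              · rw [hyo j hjl hjr]; exact hpairfull j hjl hjr
            have hdy := dec_ShF hshy
            have hleven : (x l : ℕ) % 2 = 0 := by omega
            refine ⟨_, henc, hmono, ?_, ?_, ?_⟩
            · rw [hdy.2, hdx.2]
              exact bflip (by omega) (by omega) (by omega)
            · intro j hj
              rw [fin2_zero hj, hdy.1, hdx.1, hleven]; simp
            · exact Or.inr (Or.inr ⟨hshy, by omega⟩)
          · -- single cell l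
            have hshy : ShL (upd (upd x r ((x r : ℕ) + 1)) l ((x l : ℕ) + 0)) l := by
              refine ⟨by rw [hyl]; omega, fun j hj => ?_⟩
              rcases eq_or_ne j r with rfl | hjr
              · rw [hyr]; omega
              · rw [hyo j hj hjr]; exact hpairfull j hj hjr
            have hdy := dec_ShL hshy
            rw [hyl] at hdy
            refine ⟨_, henc, hmono, ?_, ?_, ?_⟩
            · rw [hdy.2, hdx.2]
              exact bflip (by omega) (by omega) (by omega)
            · intro j hj
              rw [fin2_zero hj, hdy.1, hdx.1]
            · refine Or.inr (Or.inl ⟨l, hshy, ?_⟩)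
              rw [sumFree_ShL hshy, hyl]
              omega
        · -- bump by 2
          rw [if_neg hd] at henc
          have hd1 : (x l : ℕ) / 2 % 2 = 1 := by omega
          have hlge2 : 2 ≤ (x l : ℕ) := by omega
          have hv'q : (x l : ℕ) + 2 < q := by omega
          have hyr : ((upd (upd x r ((x r : ℕ) + 1)) l ((x l : ℕ) + 2)) r : ℕ)
              = (x r : ℕ) + 1 := by
            rw [upd_other (Ne.symm hlr')]; exact upd_self (by omega)
          have hyl : ((upd (upd x r ((x r : ℕ) + 1)) l ((x l : ℕ) + 2)) l : ℕ)
              = (x l : ℕ) + 2 := upd_self hv'q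
          have hyo : ∀ j, j ≠ l → j ≠ r →
              (upd (upd x r ((x r : ℕ) + 1)) l ((x l : ℕ) + 2)) j = x j := by
            intro j hjl hjr
            rw [upd_other hjl, upd_other hjr]
          have hmono : ∀ j, x j ≤ (upd (upd x r ((x r : ℕ) + 1)) l ((x l : ℕ) + 2)) j := by
            intro j
            rcases eq_or_ne j l with rfl | hjl
            · rw [Fin.le_def, hyl]; omega
            rcases eq_or_ne j r with rfl | hjr
            · rw [Fin.le_def, hyr]; omega
            · rw [hyo j hjl hjr]
          by_cases hfullv : (x l : ℕ) + 3 = q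
          · have hshy : ShF (upd (upd x r ((x r : ℕ) + 1)) l ((x l : ℕ) + 2)) := by
              intro j
              rcases eq_or_ne j l with rfl | hjl
              · rw [hyl]; omega
              rcases eq_or_ne j r with rfl | hjr
              · rw [hyr]; omega
              · rw [hyo j hjl hjr]; exact hpairfull j hjl hjr
            have hdy := dec_ShF hshy
            have hleven : (x l : ℕ) % 2 = 0 := by omega
            refine ⟨_, henc, hmono, ?_, ?_, ?_⟩
            · rw [hdy.2, hdx.2]
              exact bflip (by omega) (by omega) (by omega)
            · intro j hj
              rw [fin2_zero hj, hdy.1, hdx.1, hleven]; simp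
            · exact Or.inr (Or.inr ⟨hshy, by omega⟩)
          · have hshy : ShL (upd (upd x r ((x r : ℕ) + 1)) l ((x l : ℕ) + 2)) l := by
              refine ⟨by rw [hyl]; omega, fun j hj => ?_⟩
              rcases eq_or_ne j r with rfl | hjr
              · rw [hyr]; omega
              · rw [hyo j hj hjr]; exact hpairfull j hj hjr
            have hdy := dec_ShL hshy
            rw [hyl] at hdy
            refine ⟨_, henc, hmono, ?_, ?_, ?_⟩
            · rw [hdy.2, hdx.2]
              exact bflip (by omega) (by omega) (by omega)
            · intro j hj
              rw [fin2_zero hj, hdy.1, hdx.1]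
              exact beqd (by omega)
            · refine Or.inr (Or.inl ⟨l, hshy, ?_⟩)
              rw [sumFree_ShL hshy, hyl]
              omega
      · -- saturating, at least three non-full cells remain
        rw [if_neg h2] at henc
        have hrl2 : (l : ℕ) + 2 ≤ (r : ℕ) := by omega
        have hlt : (r : ℕ) - 1 < n := by have := r.isLt; omega
        have hr'l : l < (⟨(r : ℕ) - 1, hlt⟩ : Fin n) := Fin.lt_def.mpr (by
          show (l : ℕ) < (r : ℕ) - 1
          omega)
        have hr'r : (⟨(r : ℕ) - 1, hlt⟩ : Fin n) < r := Fin.lt_def.mpr (by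
          show (r : ℕ) - 1 < (r : ℕ)
          omega)
        have hxr' : (x ⟨(r : ℕ) - 1, hlt⟩ : ℕ) = 0 := hint _ hr'l hr'r
        have hyr : ((upd x r ((x r : ℕ) + 1)) r : ℕ) = (x r : ℕ) + 1 := upd_self (by omega)
        have hyr' : ((upd x r ((x r : ℕ) + 1)) ⟨(r : ℕ) - 1, hlt⟩ : ℕ) = 0 := by
          rw [upd_other (ne_of_lt hr'r)]; exact hxr'
        have hyl : (upd x r ((x r : ℕ) + 1)) l = x l := upd_other hlr'
        have hshy : Sh1 (upd x r ((x r : ℕ) + 1)) l ⟨(r : ℕ) - 1, hlt⟩ := by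
          refine ⟨hr'l, by rw [hyl]; exact hxl, by rw [hyr']; omega, ?_, ?_, ?_⟩
          · intro j hj
            rw [upd_other (ne_of_lt (lt_trans hj hlr))]; exact hfl j hj
          · intro j hj
            have hjv : (r : ℕ) - 1 < (j : ℕ) := Fin.lt_def.mp hj
            rcases eq_or_ne j r with rfl | hjr
            · rw [hyr]; omega
            · have : r < j := Fin.lt_def.mpr (by
                have : (j : ℕ) ≠ (r : ℕ) := fun h => hjr (Fin.ext h)
                omega)
              rw [upd_other hjr]; exact hfr j this
          · intro j hj1 hj2
            have : j < r := lt_trans hj2 hr'r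
            rw [upd_other (ne_of_lt this)]
            exact hint j hj1 this
        have hdy := dec_Sh1 hq hshy
        refine ⟨_, henc, ?_, ?_, ?_, ?_⟩
        · intro j
          rcases eq_or_ne j r with rfl | hj
          · rw [Fin.le_def, hyr]; omega
          · rw [upd_other hj]
        · rw [hdy.2, hdx.2, hyr']
          exact bflip (by omega) (by omega) (by omega)
        · intro j hj
          rw [fin2_zero hj, hdy.1, hdx.1, hyl]
        · refine Or.inl ⟨l, _, hshy, ?_⟩
          have hsf := sumFree_upd (x := x) (j := r) (v := (x r : ℕ) + 1) (by omega)
          omega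

/-! ### assembling everything -/

lemma inv_mono {w w' : ℕ} {x : Fin n → Fin q} (h : w' ≤ w) (hi : Inv w x) : Inv w' x := by
  rcases hi with ⟨l, r, hs, hb⟩ | ⟨c, hs, hb⟩ | ⟨hs, hb⟩
  · exact Or.inl ⟨l, r, hs, by omega⟩
  · exact Or.inr (Or.inl ⟨c, hs, by omega⟩)
  · exact Or.inr (Or.inr ⟨hs, by omega⟩)

lemma step_all (hq : 3 ≤ q) (hodd : q % 2 = 1) {w : ℕ} {x : Fin n → Fin q}
    (h : Inv (w + 1) x) (i : Fin 2) : ∃ y, E i x = some y ∧ Inv w y := by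
  rcases h with ⟨l, r, hsh, hbud⟩ | ⟨c, hsh, hbud⟩ | ⟨hsh, hw⟩
  · obtain ⟨y, henc, hm, hf, hk, hinv⟩ := step_sh1 hq hodd hsh hbud i
    exact ⟨y, E_eq_some.mpr ⟨henc, hm, hf, hk⟩, hinv⟩
  · obtain ⟨y, henc, hm, hf, hk, hinv⟩ := step_line hq hodd hsh hbud i
    exact ⟨y, E_eq_some.mpr ⟨henc, hm, hf, hk⟩, hinv⟩
  · omega

lemma canWriteOf (hq : 3 ≤ q) (hodd : q % 2 = 1) :
    ∀ (l : List (Fin 2)) (x : Fin n → Fin q) (w : ℕ), Inv w x → l.length ≤ w →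
      CanWrite E x l := by
  intro l
  induction l with
  | nil => intro x w _ _; exact trivial
  | cons i ls ih =>
    intro x w hinv hlen
    simp only [List.length_cons] at hlen
    have hinv' : Inv (ls.length + 1) x := inv_mono (by omega) hinv
    obtain ⟨y, hE, hinvy⟩ := step_all hq hodd hinv' i
    exact ⟨y, hE, ih y ls.length hinvy le_rfl⟩

lemma dec_zero (hq : 3 ≤ q) (hn : 2 ≤ n) {x : Fin n → Fin q}
    (hx : ∀ j, (x j : ℕ) = 0) : dec x = fun _ => false := by
  have huniv : NFs x = Finset.univ := by
    ext j
    simp only [mem_NFs, Finset.mem_univ, iff_true]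
    rw [hx j]; omega
  have hcard : (NFs x).card = n := by
    rw [huniv, Finset.card_univ, Fintype.card_fin]
  have h1 : 1 < (NFs x).card := by omega
  funext i
  unfold dec
  rw [dif_pos h1]
  rcases fin2_cases i with rfl | rfl
  · rw [if_pos rfl, hx]; decide
  · rw [if_neg (by decide), hx]; decide

lemma inv_zero (hq : 3 ≤ q) (hodd : q % 2 = 1) (hn : 2 ≤ n) {x : Fin n → Fin q}
    (hx : ∀ j, (x j : ℕ) = 0) : Inv ((n - 1) * (q - 1) + (q - 1) / 2) x := by
  have hn1 : (0 : ℕ) < n := by omega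
  have hn2 : n - 1 < n := by omega
  refine Or.inl ⟨⟨0, hn1⟩, ⟨n - 1, hn2⟩, ⟨?_, ?_, ?_, ?_, ?_, ?_⟩, ?_⟩
  · exact Fin.lt_def.mpr (by simp; omega)
  · rw [hx]; omega
  · rw [hx]; omega
  · intro j hj
    have := Fin.lt_def.mp hj
    simp at this
  · intro j hj
    have h1 := Fin.lt_def.mp hj
    have h2 := j.isLt
    simp at h1
    omega
  · intro j _ _; exact hx j
  · have hS : sumFree x = n * (q - 1) := by
      unfold sumFree
      calc ∑ j : Fin n, (q - 1 - (x j : ℕ)) = ∑ _j : Fin n, (q - 1) :=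
            Finset.sum_congr rfl (fun j _ => by rw [hx j, Nat.sub_zero])
        _ = n * (q - 1) := by
            rw [Finset.sum_const, Finset.card_univ, Fintype.card_fin, smul_eq_mul]
    rw [hS]
    have hA : (n - 1) * (q - 1) + (q - 1) = n * (q - 1) := by
      have h : n - 1 + 1 = n := by omega
      calc (n - 1) * (q - 1) + (q - 1) = ((n - 1) + 1) * (q - 1) := by ring
        _ = n * (q - 1) := by rw [h]
    rw [← hA]
    generalize (n - 1) * (q - 1) = A
    omega

end FlashAux

/-- For odd `q ≥ 3` and `n ≥ 2`, there exists an `(n,2)_q` flash code guaranteeing at least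
`t = (n-1)(q-1) + ⌊(q-1)/2⌋` writes before a block erasure. -/
theorem exists_two_bit_flash_code
    (n q : ℕ) (hq : 3 ≤ q) (hodd : Odd q) (hn : 2 ≤ n) :
    ∃ (D : (Fin n → Fin q) → (Fin 2 → Bool))
      (E : Fin 2 → (Fin n → Fin q) → Option (Fin n → Fin q)),
      IsFlashCode D E ∧ Guarantees E ((n - 1) * (q - 1) + (q - 1) / 2) := by
  have hodd' : q % 2 = 1 := Nat.odd_iff.mp hodd
  refine ⟨FlashAux.dec, FlashAux.E, ⟨?_, ?_, ?_, ?_⟩, ?_⟩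
  · intro x hx; exact FlashAux.dec_zero hq hn hx
  · intro i x y hE j; exact (FlashAux.E_eq_some.mp hE).2.1 j
  · intro i x y hE; exact (FlashAux.E_eq_some.mp hE).2.2.1
  · intro i x y hE j hj; exact (FlashAux.E_eq_some.mp hE).2.2.2 j hj
  · intro x hx l hl
    exact FlashAux.canWriteOf hq hodd' l x _ (FlashAux.inv_zero hq hodd' hn hx) hl
end

section
/- Let k ≥ 2, q ≥ 2, and n > k be integers. There exists an (n,k)_q flash code that guarantees at least t = (q−1)·⌊(n−k)/⌈log₂ k⌉⌋ writes. (The construction partitions the n cells into an index group of n−k cells, subdivided into ⌊(n−k)/⌈log₂ k⌉⌋ index blocks, and a parity group of k cells, and proceeds in q−1 phases of ⌊(n−k)/⌈log₂ k⌉⌋ writes each.) -/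
noncomputable section
open Classical

namespace FC

variable {n k q : ℕ}

/-- number of cells per index block -/
def cb (k : ℕ) : ℕ := Nat.clog 2 k
/-- number of index blocks -/
def nb (n k : ℕ) : ℕ := (n - k) / cb k

def val (x : Fin n → Fin q) (a : ℕ) : ℕ := if h : a < n then (x ⟨a, h⟩ : ℕ) else 0

def Bcell (k : ℕ) (x : Fin n → Fin q) (b j : ℕ) : ℕ := val x (b * cb k + j)

def zeroB (k : ℕ) (x : Fin n → Fin q) (b : ℕ) : Prop := ∀ j < cb k, Bcell k x b j = 0

def fz (x : Fin n → Fin q) (k : ℕ) : ℕ :=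
  Nat.find (p := fun b => nb n k ≤ b ∨ zeroB k x b) ⟨nb n k, Or.inl le_rfl⟩

def rz (x : Fin n → Fin q) (k : ℕ) : ℕ :=
  Nat.find (p := fun r => ∀ b, r ≤ b → b < nb n k → ¬ zeroB k x b)
    ⟨nb n k, fun b hb hb' _ => absurd hb (by omega)⟩

def suppB (k : ℕ) (x : Fin n → Fin q) (b : ℕ) : ℕ :=
  ∑ j ∈ Finset.range (cb k), if 0 < Bcell k x b j then 2^j else 0

def maxB (k : ℕ) (x : Fin n → Fin q) (b : ℕ) : ℕ :=
  (Finset.range (cb k)).sup (Bcell k x b)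

def cond (k : ℕ) (x : Fin n → Fin q) (i b : ℕ) : Prop :=
  (b < fz x k ∧ suppB k x b = i ∧ 1 ≤ i) ∨ (fz x k < rz x k ∧ rz x k ≤ b ∧ i = 0)

def S (k : ℕ) (x : Fin n → Fin q) (i : ℕ) : ℕ :=
  ∑ b ∈ Finset.range (nb n k), if cond k x i b then maxB k x b else 0

def Dec (k : ℕ) (x : Fin n → Fin q) : Fin k → Bool :=
  fun i => decide ((val x (n - k + i) + S k x i) % 2 = 1)

def Pot (k : ℕ) (x : Fin n → Fin q) : ℕ :=
  (∑ i ∈ Finset.range k, val x (n - k + i)) + ∑ b ∈ Finset.range (nb n k), maxB k x b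

def LBlock (k : ℕ) (x : Fin n → Fin q) (b i0 w0 : ℕ) : Prop :=
  1 ≤ i0 ∧ i0 < k ∧ 1 ≤ w0 ∧ w0 ≤ q - 1 ∧
    ∀ j < cb k, Bcell k x b j = if i0.testBit j then w0 else 0

def RBlock (k : ℕ) (x : Fin n → Fin q) (b w0 : ℕ) : Prop :=
  1 ≤ w0 ∧ w0 ≤ q - 1 ∧ Bcell k x b 0 = w0 ∧
    ∀ j, 0 < j → j < cb k → Bcell k x b j = 0

def Inv (k : ℕ) (x : Fin n → Fin q) : Prop :=
  ∃ L R : ℕ, ∃ ow w : ℕ → ℕ,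
    L ≤ R ∧ R ≤ nb n k ∧ (R < nb n k → L < R) ∧
    (∀ b < L, LBlock k x b (ow b) (w b)) ∧
    (∀ b, L ≤ b → b < R → zeroB k x b) ∧
    (∀ b, R ≤ b → b < nb n k → RBlock k x b (w b)) ∧
    (∀ b < L, val x (n - k + ow b) = q - 1) ∧
    (R < nb n k → val x (n - k) = q - 1) ∧
    (∀ b b', b < L → b' < L → b ≠ b' → ow b = ow b' → w b = q - 1 ∨ w b' = q - 1) ∧
    (∀ b b', R ≤ b → b < nb n k → R ≤ b' → b' < nb n k → b ≠ b' →
      w b = q - 1 ∨ w b' = q - 1)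

def upd (x : Fin n → Fin q) (A : ℕ → Prop) : Fin n → Fin q :=
  fun a => if A (a : ℕ) then
      ⟨min ((x a : ℕ) + 1) (q - 1), lt_of_le_of_lt (min_le_right _ _)
        (by have := (x a).isLt; omega)⟩
    else x a

def tW (n k q : ℕ) : ℕ := (q - 1) * nb n k

def Enc (n k q : ℕ) : Fin k → (Fin n → Fin q) → Option (Fin n → Fin q) := fun i x =>
  if h : ∃ y, (∀ j, x j ≤ y j) ∧ Dec k y i = !Dec k x i ∧
      (∀ j, j ≠ i → Dec k y j = Dec k x j) ∧
      ((Inv k x ∧ Pot k x + 1 ≤ tW n k q) → (Inv k y ∧ Pot k y = Pot k x + 1)) then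
    some h.choose
  else none


section Helpers

lemma cb_pos (hk : 2 ≤ k) : 0 < cb k := Nat.clog_pos (by norm_num) hk

lemma k_le_pow : k ≤ 2 ^ cb k := Nat.le_pow_clog (by norm_num) k

lemma bcell_lt_nk {b j : ℕ} (hb : b < nb n k) (hj : j < cb k) : b * cb k + j < n - k := by
  have h1 : (b + 1) * cb k = b * cb k + cb k := by ring
  have h2 : (b + 1) * cb k ≤ nb n k * cb k := Nat.mul_le_mul_right _ (by omega)
  have h3 : nb n k * cb k ≤ n - k := Nat.div_mul_le_self _ _
  omega

lemma bcell_lt_n {b j : ℕ} (hb : b < nb n k) (hj : j < cb k) : b * cb k + j < n := by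
  have := bcell_lt_nk (n := n) hb hj; omega

lemma pcell_lt (hn : k ≤ n) {i : ℕ} (hi : i < k) : n - k + i < n := by omega

lemma bcell_inj {b j b' j' : ℕ} (hj : j < cb k) (hj' : j' < cb k)
    (h : b * cb k + j = b' * cb k + j') : b = b' ∧ j = j' := by
  rcases lt_trichotomy b b' with hbb | hbb | hbb
  · exfalso
    have h1 : (b + 1) * cb k = b * cb k + cb k := by ring
    have h2 : (b + 1) * cb k ≤ b' * cb k := Nat.mul_le_mul_right _ (by omega)
    omega
  · refine ⟨hbb, by subst hbb; omega⟩
  · exfalso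
    have h1 : (b' + 1) * cb k = b' * cb k + cb k := by ring
    have h2 : (b' + 1) * cb k ≤ b * cb k := Nat.mul_le_mul_right _ (by omega)
    omega

lemma val_le (x : Fin n → Fin q) (a : ℕ) : val x a ≤ q - 1 := by
  unfold val; split
  · have := (x ⟨a, by assumption⟩).isLt; omega
  · omega

lemma val_upd_mem {x : Fin n → Fin q} {A : ℕ → Prop} {a : ℕ} (ha : a < n) (hA : A a) :
    val (upd x A) a = min (val x a + 1) (q - 1) := by
  unfold val upd
  rw [dif_pos ha, dif_pos ha, if_pos hA]

lemma val_upd_mem' {x : Fin n → Fin q} {A : ℕ → Prop} {a : ℕ} (ha : a < n) (hA : A a)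
    (hb : val x a + 1 ≤ q - 1) : val (upd x A) a = val x a + 1 := by
  rw [val_upd_mem ha hA]; omega

lemma val_upd_not {x : Fin n → Fin q} {A : ℕ → Prop} {a : ℕ} (hA : ¬ A a) :
    val (upd x A) a = val x a := by
  unfold val upd
  split
  · simp [hA]
  · rfl

lemma upd_mono (x : Fin n → Fin q) (A : ℕ → Prop) : ∀ j, x j ≤ upd x A j := by
  intro j
  unfold upd
  split
  · show (x j : ℕ) ≤ _
    have := (x j).isLt
    simp only []
    omega
  · exact le_rfl

lemma sum_testBit : ∀ (c i : ℕ), i < 2 ^ c →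
    (∑ j ∈ Finset.range c, if i.testBit j then 2^j else 0) = i := by
  intro c
  induction c with
  | zero => intro i hi; interval_cases i; simp
  | succ c ih =>
    intro i hi
    rw [Finset.sum_range_succ' (fun j => if i.testBit j then 2^j else 0)]
    have h1 : ∀ j, (if i.testBit (j+1) then 2^(j+1) else 0)
        = 2 * (if (i/2).testBit j then 2^j else 0) := by
      intro j
      rw [Nat.testBit_add_one]
      split <;> ring
    simp only [h1]
    rw [← Finset.mul_sum, ih (i/2) (by omega)]
    have h0 : (if i.testBit 0 then 2^0 else 0) = i % 2 := by
      rw [Nat.testBit_zero]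
      rcases Nat.mod_two_eq_zero_or_one i with h | h <;> simp [h]
    rw [h0]
    omega

lemma exists_testBit {i0 : ℕ} (h1 : 1 ≤ i0) (h2 : i0 < k) : ∃ j < cb k, i0.testBit j := by
  by_contra hcon
  push_neg at hcon
  have : i0 = 0 := by
    apply Nat.eq_of_testBit_eq
    intro j
    rw [Nat.zero_testBit]
    by_cases hj : j < cb k
    · simpa using hcon j hj
    · exact Nat.testBit_lt_two_pow (lt_of_lt_of_le (lt_of_lt_of_le h2 (k_le_pow))
        (Nat.pow_le_pow_right (by norm_num) (by omega)))
  omega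


lemma suppB_eq (hk : 2 ≤ k) {x : Fin n → Fin q} {b i0 w0 : ℕ}
    (h : LBlock k x b i0 w0) : suppB k x b = i0 := by
  obtain ⟨h1, h2, h3, h4, h5⟩ := h
  unfold suppB
  have : ∀ j ∈ Finset.range (cb k),
      (if 0 < Bcell k x b j then 2^j else 0) = (if i0.testBit j then 2^j else 0) := by
    intro j hj
    rw [h5 j (Finset.mem_range.mp hj)]
    by_cases ht : i0.testBit j <;> simp [ht] <;> omega
  rw [Finset.sum_congr rfl this]
  exact sum_testBit _ _ (lt_of_lt_of_le h2 (k_le_pow))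

lemma maxB_lblock (hk : 2 ≤ k) {x : Fin n → Fin q} {b i0 w0 : ℕ}
    (h : LBlock k x b i0 w0) : maxB k x b = w0 := by
  obtain ⟨h1, h2, h3, h4, h5⟩ := h
  apply le_antisymm
  · apply Finset.sup_le
    intro j hj
    rw [h5 j (Finset.mem_range.mp hj)]
    split <;> omega
  · obtain ⟨j, hj, ht⟩ := exists_testBit h1 h2
    have := Finset.le_sup (f := Bcell k x b) (Finset.mem_range.mpr hj)
    rw [h5 j hj, if_pos ht] at this
    exact this

lemma maxB_rblock (hk : 2 ≤ k) {x : Fin n → Fin q} {b w0 : ℕ}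
    (h : RBlock k x b w0) : maxB k x b = w0 := by
  obtain ⟨h1, h2, h3, h4⟩ := h
  apply le_antisymm
  · apply Finset.sup_le
    intro j hj
    rcases Nat.eq_zero_or_pos j with hj0 | hj0
    · subst hj0; omega
    · rw [h4 j hj0 (Finset.mem_range.mp hj)]; omega
  · have := Finset.le_sup (f := Bcell k x b) (Finset.mem_range.mpr (cb_pos hk))
    rw [h3] at this
    exact this

lemma maxB_zero {x : Fin n → Fin q} {b : ℕ} (h : zeroB k x b) : maxB k x b = 0 := by
  apply Nat.le_zero.mp
  apply Finset.sup_le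
  intro j hj
  rw [h j (Finset.mem_range.mp hj)]

lemma lblock_nonzero (hk : 2 ≤ k) {x : Fin n → Fin q} {b i0 w0 : ℕ}
    (h : LBlock k x b i0 w0) : ¬ zeroB k x b := by
  intro hz
  have := maxB_zero hz
  rw [maxB_lblock hk h] at this
  have h3 := h.2.2.1
  omega

lemma rblock_nonzero (hk : 2 ≤ k) {x : Fin n → Fin q} {b w0 : ℕ}
    (h : RBlock k x b w0) : ¬ zeroB k x b := by
  intro hz
  have := maxB_zero hz
  rw [maxB_rblock hk h] at this
  have h3 := h.1
  omega

lemma fz_eq {x : Fin n → Fin q} {L : ℕ} (hL : L ≤ nb n k)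
    (h1 : ∀ b < L, ¬ zeroB k x b) (h2 : L = nb n k ∨ zeroB k x L) : fz x k = L := by
  unfold fz
  rw [Nat.find_eq_iff]
  constructor
  · rcases h2 with h | h
    · exact Or.inl (by omega)
    · exact Or.inr h
  · intro b hb
    push_neg
    exact ⟨by omega, h1 b hb⟩

lemma rz_eq {x : Fin n → Fin q} {R : ℕ} (hR : R ≤ nb n k)
    (h1 : ∀ b, R ≤ b → b < nb n k → ¬ zeroB k x b)
    (h2 : 0 < R → R - 1 < nb n k ∧ zeroB k x (R - 1)) : rz x k = R := by
  unfold rz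
  rw [Nat.find_eq_iff]
  refine ⟨h1, ?_⟩
  intro r hr
  push_neg
  exact ⟨R - 1, by omega, (h2 (by omega)).1, (h2 (by omega)).2⟩

lemma rz_le_nb (x : Fin n → Fin q) : rz x k ≤ nb n k := by
  unfold rz
  exact Nat.find_le (fun b hb hb' _ => absurd hb (by omega))


lemma S_eval (hk : 2 ≤ k) {x : Fin n → Fin q} {L R : ℕ} {ow w : ℕ → ℕ}
    (hLR : L ≤ R) (hRm : R ≤ nb n k) (hf : R < nb n k → L < R)
    (hL : ∀ b < L, LBlock k x b (ow b) (w b))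
    (hM : ∀ b, L ≤ b → b < R → zeroB k x b)
    (hR : ∀ b, R ≤ b → b < nb n k → RBlock k x b (w b)) (i : ℕ) :
    S k x i = (∑ b ∈ Finset.range L, if ow b = i ∧ 1 ≤ i then w b else 0)
      + ∑ b ∈ Finset.Ico R (nb n k), if i = 0 then w b else 0 := by
  have hLm : L ≤ nb n k := le_trans hLR hRm
  have hfz : fz x k = L := by
    apply fz_eq hLm (fun b hb => lblock_nonzero hk (hL b hb))
    by_cases hLR' : L < R
    · exact Or.inr (hM L le_rfl hLR')
    · left
      have : L = R := le_antisymm hLR (not_lt.mp hLR')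
      by_contra hne
      have := hf (by omega)
      omega
  have hcondL : ∀ b < L, cond k x i b ↔ (ow b = i ∧ 1 ≤ i) := by
    intro b hb
    unfold cond
    rw [hfz, suppB_eq hk (hL b hb)]
    constructor
    · rintro (⟨_, h2, h3⟩ | ⟨h1, h2, h3⟩)
      · exact ⟨h2, h3⟩
      · exfalso
        have := rz_le_nb (k := k) x
        by_cases hLR' : L < R
        · have hrz : rz x k = R := by
            apply rz_eq hRm (fun b hb hb' => rblock_nonzero hk (hR b hb hb'))
            intro _
            exact ⟨by omega, hM (R-1) (by omega) (by omega)⟩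
          omega
        · have hRm' : R = nb n k := by
            by_contra hne
            exact hLR' (hf (by omega))
          omega
    · intro ⟨h1, h2⟩
      exact Or.inl ⟨hb, h1, h2⟩
  have hcondR : ∀ b, R ≤ b → b < nb n k → (cond k x i b ↔ i = 0) := by
    intro b hb hbm
    have hLR' : L < R := hf (by omega)
    have hrz : rz x k = R := by
      apply rz_eq hRm (fun b hb hb' => rblock_nonzero hk (hR b hb hb'))
      intro _
      exact ⟨by omega, hM (R-1) (by omega) (by omega)⟩
    unfold cond
    rw [hfz, hrz]
    constructor
    · rintro (⟨h1, _, _⟩ | ⟨_, _, h3⟩)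
      · omega
      · exact h3
    · intro h
      exact Or.inr ⟨by omega, hb, h⟩
  have hsplit : S k x i = (∑ b ∈ Finset.Ico 0 L, if cond k x i b then maxB k x b else 0)
      + ((∑ b ∈ Finset.Ico L R, if cond k x i b then maxB k x b else 0)
        + (∑ b ∈ Finset.Ico R (nb n k), if cond k x i b then maxB k x b else 0)) := by
    rw [S, Finset.range_eq_Ico,
      ← Finset.sum_Ico_consecutive _ (Nat.zero_le L) hLm,
      ← Finset.sum_Ico_consecutive _ hLR hRm]
  rw [hsplit]
  have e1 : (∑ b ∈ Finset.Ico 0 L, if cond k x i b then maxB k x b else 0)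
      = ∑ b ∈ Finset.range L, if ow b = i ∧ 1 ≤ i then w b else 0 := by
    rw [← Finset.range_eq_Ico]
    apply Finset.sum_congr rfl
    intro b hb
    have hb' := Finset.mem_range.mp hb
    rw [maxB_lblock hk (hL b hb')]
    exact if_congr (hcondL b hb') rfl rfl
  have e2 : (∑ b ∈ Finset.Ico L R, if cond k x i b then maxB k x b else 0) = 0 := by
    apply Finset.sum_eq_zero
    intro b hb
    have hb' := Finset.mem_Ico.mp hb
    rw [maxB_zero (hM b hb'.1 hb'.2)]
    simp
  have e3 : (∑ b ∈ Finset.Ico R (nb n k), if cond k x i b then maxB k x b else 0)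
      = ∑ b ∈ Finset.Ico R (nb n k), if i = 0 then w b else 0 := by
    apply Finset.sum_congr rfl
    intro b hb
    have hb' := Finset.mem_Ico.mp hb
    rw [maxB_rblock hk (hR b hb'.1 hb'.2)]
    exact if_congr (hcondR b hb'.1 hb'.2) rfl rfl
  rw [e1, e2, e3]
  omega


lemma decide_flip (A : ℕ) : decide ((A + 1) % 2 = 1) = !decide (A % 2 = 1) := by
  rcases Nat.mod_two_eq_zero_or_one A with h | h
  · have h1 : (A + 1) % 2 = 1 := by omega
    simp [h, h1]
  · have h1 : (A + 1) % 2 = 0 := by omega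
    simp [h, h1]

lemma lblock_congr {x y : Fin n → Fin q} {b i0 w0 : ℕ}
    (hcell : ∀ j < cb k, Bcell k y b j = Bcell k x b j)
    (h : LBlock k x b i0 w0) : LBlock k y b i0 w0 := by
  obtain ⟨h1, h2, h3, h4, h5⟩ := h
  exact ⟨h1, h2, h3, h4, fun j hj => by rw [hcell j hj, h5 j hj]⟩

lemma rblock_congr {x y : Fin n → Fin q} {b w0 : ℕ}
    (hk : 2 ≤ k)
    (hcell : ∀ j < cb k, Bcell k y b j = Bcell k x b j)
    (h : RBlock k x b w0) : RBlock k y b w0 := by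
  obtain ⟨h1, h2, h3, h4⟩ := h
  exact ⟨h1, h2, by rw [hcell 0 (cb_pos hk), h3], fun j hj hj' => by rw [hcell j hj', h4 j hj hj']⟩

lemma zerob_congr {x y : Fin n → Fin q} {b : ℕ}
    (hcell : ∀ j < cb k, Bcell k y b j = Bcell k x b j)
    (h : zeroB k x b) : zeroB k y b :=
  fun j hj => by rw [hcell j hj, h j hj]

lemma maxB_congr {x y : Fin n → Fin q} {b : ℕ}
    (hcell : ∀ j < cb k, Bcell k y b j = Bcell k x b j) : maxB k y b = maxB k x b := by
  unfold maxB
  exact Finset.sup_congr rfl (fun j hj => hcell j (Finset.mem_range.mp hj))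

lemma accounting (hk : 2 ≤ k) (hq : 2 ≤ q) {x : Fin n → Fin q} {L R : ℕ} {ow w : ℕ → ℕ}
    (hLR : L ≤ R) (hRm : R ≤ nb n k)
    (hL : ∀ b < L, LBlock k x b (ow b) (w b))
    (hM : ∀ b, L ≤ b → b < R → zeroB k x b)
    (hR : ∀ b, R ≤ b → b < nb n k → RBlock k x b (w b))
    (hdL : ∀ b < L, val x (n - k + ow b) = q - 1)
    (hdR : R < nb n k → val x (n - k) = q - 1)
    (heL : ∀ b b', b < L → b' < L → b ≠ b' → ow b = ow b' → w b = q - 1 ∨ w b' = q - 1)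
    (heR : ∀ b b', R ≤ b → b < nb n k → R ≤ b' → b' < nb n k → b ≠ b' →
      w b = q - 1 ∨ w b' = q - 1)
    {i : ℕ} (hik : i < k) (hpar' : val x (n - k + i) = q - 1)
    (hfull : ∀ b, ((1 ≤ i ∧ b < L ∧ ow b = i) ∨ (i = 0 ∧ R ≤ b ∧ b < nb n k)) → w b = q - 1)
    (hR2 : R < L + 2) : (q - 1) * nb n k ≤ Pot k x := by
  classical
  set m := nb n k with hm
  have hLm : L ≤ m := le_trans hLR hRm
  set F : Finset ℕ := Finset.range L ∪ Finset.Ico R m with hF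
  set NF : Finset ℕ := F.filter (fun b => w b < q - 1) with hNF
  set owf : ℕ → ℕ := fun b => if b < L then ow b else 0 with howf
  have hmemF : ∀ b ∈ F, b < L ∨ (R ≤ b ∧ b < m) := by
    intro b hb
    rcases Finset.mem_union.mp hb with h | h
    · exact Or.inl (Finset.mem_range.mp h)
    · exact Or.inr (Finset.mem_Ico.mp h)
  have hwle : ∀ b ∈ F, w b ≤ q - 1 := by
    intro b hb
    rcases hmemF b hb with h | h
    · exact (hL b h).2.2.2.1
    · exact (hR b h.1 h.2).2.1
  have howlt : ∀ b ∈ F, owf b < k := by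
    intro b hb
    by_cases hbL : b < L
    · simp only [howf, if_pos hbL]
      exact (hL b hbL).2.1
    · simp only [howf, if_neg hbL]
      omega
  have howfull : ∀ b ∈ NF, val x (n - k + owf b) = q - 1 := by
    intro b hb
    have hb' := Finset.mem_filter.mp hb
    rcases hmemF b hb'.1 with h | h
    · simp only [howf, if_pos h]
      exact hdL b h
    · have hbL : ¬ b < L := by omega
      simp only [howf, if_neg hbL, Nat.add_zero]
      exact hdR (by omega)
  have hinj : Set.InjOn owf NF := by
    intro b hb b' hb' heq
    by_contra hne
    have hbF := Finset.mem_filter.mp hb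
    have hbF' := Finset.mem_filter.mp hb'
    rcases hmemF b hbF.1 with h1 | h1 <;> rcases hmemF b' hbF'.1 with h2 | h2
    · simp only [howf, if_pos h1, if_pos h2] at heq
      rcases heL b b' h1 h2 hne heq with h | h
      · have := hbF.2; omega
      · have := hbF'.2; omega
    · have hbL' : ¬ b' < L := by omega
      simp only [howf, if_pos h1, if_neg hbL'] at heq
      have := (hL b h1).1; omega
    · have hbL : ¬ b < L := by omega
      simp only [howf, if_neg hbL, if_pos h2] at heq
      have := (hL b' h2).1; omega
    · have hbL : ¬ b < L := by omega
      have hbL' : ¬ b' < L := by omega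
      simp only [howf, if_neg hbL, if_neg hbL'] at heq
      rcases heR b b' h1.1 h1.2 h2.1 h2.2 hne with h | h
      · have := hbF.2; omega
      · have := hbF'.2; omega
  have hnotmem : i ∉ NF.image owf := by
    intro hmem
    obtain ⟨b, hb, hbe⟩ := Finset.mem_image.mp hmem
    have hbF := Finset.mem_filter.mp hb
    rcases hmemF b hbF.1 with h | h
    · simp only [howf, if_pos h] at hbe
      have h1 := (hL b h).1
      have := hfull b (Or.inl ⟨by omega, h, hbe⟩)
      have := hbF.2; omega
    · have hbL : ¬ b < L := by omega
      simp only [howf, if_neg hbL] at hbe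
      have := hfull b (Or.inr ⟨hbe.symm, h.1, h.2⟩)
      have := hbF.2; omega
  set T : Finset ℕ := insert i (NF.image owf) with hT
  have hTsub : T ⊆ Finset.range k := by
    intro a ha
    rcases Finset.mem_insert.mp ha with h | h
    · subst h; exact Finset.mem_range.mpr hik
    · obtain ⟨b, hb, hbe⟩ := Finset.mem_image.mp h
      subst hbe
      exact Finset.mem_range.mpr (howlt b (Finset.mem_filter.mp hb).1)
  have hTcard : T.card = NF.card + 1 := by
    rw [hT, Finset.card_insert_of_notMem hnotmem, Finset.card_image_of_injOn hinj]
  have hTval : ∀ a ∈ T, val x (n - k + a) = q - 1 := by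
    intro a ha
    rcases Finset.mem_insert.mp ha with h | h
    · subst h; exact hpar'
    · obtain ⟨b, hb, hbe⟩ := Finset.mem_image.mp h
      subst hbe
      exact howfull b hb
  have hpar_sum : (NF.card + 1) * (q - 1) ≤ ∑ i' ∈ Finset.range k, val x (n - k + i') := by
    calc (NF.card + 1) * (q - 1) = ∑ a ∈ T, (q - 1) := by
          rw [Finset.sum_const, hTcard, smul_eq_mul]
      _ = ∑ a ∈ T, val x (n - k + a) := by
          exact (Finset.sum_congr rfl (fun a ha => (hTval a ha).symm))
      _ ≤ ∑ i' ∈ Finset.range k, val x (n - k + i') :=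
          Finset.sum_le_sum_of_subset hTsub
  have hdisj : Disjoint (Finset.range L) (Finset.Ico R m) := by
    rw [Finset.disjoint_left]
    intro a ha ha'
    have := Finset.mem_range.mp ha
    have := (Finset.mem_Ico.mp ha').1
    omega
  have hFcard : F.card = L + (m - R) := by
    rw [hF, Finset.card_union_of_disjoint hdisj, Finset.card_range, Nat.card_Ico]
  have hFsub : F ⊆ Finset.range m := by
    intro a ha
    rcases hmemF a ha with h | h
    · exact Finset.mem_range.mpr (by omega)
    · exact Finset.mem_range.mpr h.2
  have hmaxw : ∀ b ∈ F, maxB k x b = w b := by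
    intro b hb
    rcases hmemF b hb with h | h
    · exact maxB_lblock hk (hL b h)
    · exact maxB_rblock hk (hR b h.1 h.2)
  have hNFsub : NF ⊆ F := Finset.filter_subset _ _
  have hNFcard : NF.card ≤ F.card := Finset.card_le_card hNFsub
  have hblk_sum : (F.card - NF.card) * (q - 1) ≤ ∑ b ∈ Finset.range m, maxB k x b := by
    have h1 : F \ NF ⊆ F := Finset.sdiff_subset
    calc (F.card - NF.card) * (q - 1) = ∑ b ∈ F \ NF, (q - 1) := by
          rw [Finset.sum_const, Finset.card_sdiff_of_subset hNFsub, smul_eq_mul]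
      _ = ∑ b ∈ F \ NF, w b := by
          apply Finset.sum_congr rfl
          intro b hb
          have hbF := (Finset.mem_sdiff.mp hb).1
          have hbNF := (Finset.mem_sdiff.mp hb).2
          have : ¬ w b < q - 1 := by
            intro hcon
            exact hbNF (Finset.mem_filter.mpr ⟨hbF, hcon⟩)
          have := hwle b hbF
          omega
      _ = ∑ b ∈ F \ NF, maxB k x b :=
          Finset.sum_congr rfl (fun b hb => (hmaxw b ((Finset.mem_sdiff.mp hb).1)).symm)
      _ ≤ ∑ b ∈ F, maxB k x b := Finset.sum_le_sum_of_subset h1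
      _ ≤ ∑ b ∈ Finset.range m, maxB k x b := Finset.sum_le_sum_of_subset hFsub
  have hcF : m ≤ F.card + 1 := by rw [hFcard]; omega
  calc (q - 1) * m = m * (q - 1) := Nat.mul_comm _ _
    _ ≤ (F.card + 1) * (q - 1) := Nat.mul_le_mul_right _ hcF
    _ = ((NF.card + 1) + (F.card - NF.card)) * (q - 1) := by
        congr 1
        omega
    _ = (NF.card + 1) * (q - 1) + (F.card - NF.card) * (q - 1) := Nat.add_mul _ _ _
    _ ≤ (∑ i' ∈ Finset.range k, val x (n - k + i')) + ∑ b ∈ Finset.range m, maxB k x b :=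
        Nat.add_le_add hpar_sum hblk_sum
    _ = Pot k x := rfl


/-- The conclusion of a successful step. -/
def StepGoal (x : Fin n → Fin q) (i : Fin k) : Prop :=
  ∃ y, (∀ j, x j ≤ y j) ∧ Dec k y i = !Dec k x i ∧
    (∀ j, j ≠ i → Dec k y j = Dec k x j) ∧ Inv k y ∧ Pot k y = Pot k x + 1

lemma step_parity (hk : 2 ≤ k) (hq : 2 ≤ q) (hn : k < n) {x : Fin n → Fin q}
    {L R : ℕ} {ow w : ℕ → ℕ}
    (hLR : L ≤ R) (hRm : R ≤ nb n k) (hf : R < nb n k → L < R)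
    (hL : ∀ b < L, LBlock k x b (ow b) (w b))
    (hM : ∀ b, L ≤ b → b < R → zeroB k x b)
    (hR : ∀ b, R ≤ b → b < nb n k → RBlock k x b (w b))
    (hdL : ∀ b < L, val x (n - k + ow b) = q - 1)
    (hdR : R < nb n k → val x (n - k) = q - 1)
    (heL : ∀ b b', b < L → b' < L → b ≠ b' → ow b = ow b' → w b = q - 1 ∨ w b' = q - 1)
    (heR : ∀ b b', R ≤ b → b < nb n k → R ≤ b' → b' < nb n k → b ≠ b' →
      w b = q - 1 ∨ w b' = q - 1)
    (i : Fin k) (hpar : val x (n - k + (i : ℕ)) < q - 1) : StepGoal x i := by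
  classical
  set y := upd x (fun a => a = n - k + (i : ℕ)) with hy
  have hcell : ∀ b < nb n k, ∀ j < cb k, Bcell k y b j = Bcell k x b j := by
    intro b hb j hj
    apply val_upd_not
    have := bcell_lt_nk (n := n) hb hj
    omega
  have hvi : val y (n - k + (i : ℕ)) = val x (n - k + (i : ℕ)) + 1 :=
    val_upd_mem' (pcell_lt (le_of_lt hn) i.isLt) rfl (by omega)
  have hvne : ∀ i' : ℕ, i' ≠ (i : ℕ) → val y (n - k + i') = val x (n - k + i') := by
    intro i' hne
    apply val_upd_not
    omega
  have hL' : ∀ b < L, LBlock k y b (ow b) (w b) := by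
    intro b hb
    exact lblock_congr (hcell b (by omega) ) (hL b hb)
  have hM' : ∀ b, L ≤ b → b < R → zeroB k y b := by
    intro b h1 h2
    exact zerob_congr (hcell b (by omega)) (hM b h1 h2)
  have hR' : ∀ b, R ≤ b → b < nb n k → RBlock k y b (w b) := by
    intro b h1 h2
    exact rblock_congr hk (hcell b h2) (hR b h1 h2)
  have hdL' : ∀ b < L, val y (n - k + ow b) = q - 1 := by
    intro b hb
    by_cases hne : ow b = (i : ℕ)
    · exfalso
      have := hdL b hb
      rw [hne] at this
      omega
    · rw [hvne (ow b) hne]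
      exact hdL b hb
  have hdR' : R < nb n k → val y (n - k) = q - 1 := by
    intro hRm'
    have h0 := hdR hRm'
    by_cases h0i : (i : ℕ) = 0
    · exfalso
      rw [h0i, Nat.add_zero] at hpar
      omega
    · rw [show n - k = n - k + 0 from by omega, hvne 0 (fun hc => h0i hc.symm), ← show n - k = n - k + 0 from by omega]
      exact h0
  have hInvY : Inv k y := ⟨L, R, ow, w, hLR, hRm, hf, hL', hM', hR', hdL', hdR', heL, heR⟩
  have hS : ∀ i' : ℕ, S k y i' = S k x i' := by
    intro i'
    rw [S_eval hk hLR hRm hf hL' hM' hR' i', S_eval hk hLR hRm hf hL hM hR i']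
  have hflip : val y (n - k + (i : ℕ)) + S k y (i : ℕ)
      = (val x (n - k + (i : ℕ)) + S k x (i : ℕ)) + 1 := by
    rw [hS, hvi]; omega
  have hPotY : Pot k y = Pot k x + 1 := by
    unfold Pot
    have e1 : ∀ i' ∈ Finset.range k, val y (n - k + i')
        = val x (n - k + i') + (if i' = (i : ℕ) then 1 else 0) := by
      intro i' _
      by_cases hne : i' = (i : ℕ)
      · rw [if_pos hne, hne, hvi]
      · rw [if_neg hne, hvne i' hne]; omega
    have e2 : ∀ b ∈ Finset.range (nb n k), maxB k y b = maxB k x b := by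
      intro b hb
      exact maxB_congr (hcell b (Finset.mem_range.mp hb))
    rw [Finset.sum_congr rfl e1, Finset.sum_add_distrib,
      Finset.sum_ite_eq' (Finset.range k) ((i : ℕ)) (fun _ => 1),
      if_pos (Finset.mem_range.mpr i.isLt), Finset.sum_congr rfl e2]
    exact Nat.add_right_comm _ 1 _
  refine ⟨y, upd_mono x _, ?_, ?_, hInvY, hPotY⟩
  · show decide _ = !decide _
    rw [hflip, decide_flip]
  · intro j hji
    show decide _ = decide _
    rw [hS (j : ℕ), hvne (j : ℕ) (Fin.val_ne_of_ne hji)]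


lemma step_bump_left (hk : 2 ≤ k) (hq : 2 ≤ q) (hn : k < n) {x : Fin n → Fin q}
    {L R : ℕ} {ow w : ℕ → ℕ}
    (hLR : L ≤ R) (hRm : R ≤ nb n k) (hf : R < nb n k → L < R)
    (hL : ∀ b < L, LBlock k x b (ow b) (w b))
    (hM : ∀ b, L ≤ b → b < R → zeroB k x b)
    (hR : ∀ b, R ≤ b → b < nb n k → RBlock k x b (w b))
    (hdL : ∀ b < L, val x (n - k + ow b) = q - 1)
    (hdR : R < nb n k → val x (n - k) = q - 1)
    (heL : ∀ b b', b < L → b' < L → b ≠ b' → ow b = ow b' → w b = q - 1 ∨ w b' = q - 1)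
    (heR : ∀ b b', R ≤ b → b < nb n k → R ≤ b' → b' < nb n k → b ≠ b' →
      w b = q - 1 ∨ w b' = q - 1)
    (i : Fin k) (hi1 : 1 ≤ (i : ℕ)) {b0 : ℕ} (hb0 : b0 < L) (hob : ow b0 = (i : ℕ))
    (hwb : w b0 < q - 1) : StepGoal x i := by
  classical
  have hb0m : b0 < nb n k := by omega
  have hLb0 := hL b0 hb0
  set y := upd x (fun a => ∃ j', j' < cb k ∧ ((i : ℕ)).testBit j' ∧ a = b0 * cb k + j')
    with hy
  have hcell_ne : ∀ b, b ≠ b0 → ∀ j < cb k, Bcell k y b j = Bcell k x b j := by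
    intro b hb j hj
    apply val_upd_not
    rintro ⟨j', hj', _, he⟩
    exact hb (bcell_inj hj hj' he).1
  have hcell_b0 : ∀ j < cb k, Bcell k y b0 j
      = if ((i : ℕ)).testBit j then Bcell k x b0 j + 1 else Bcell k x b0 j := by
    intro j hj
    by_cases ht : ((i : ℕ)).testBit j
    · rw [if_pos ht]
      apply val_upd_mem' (bcell_lt_n hb0m hj) ⟨j, hj, ht, rfl⟩
      have := hLb0.2.2.2.2 j hj
      rw [hob, if_pos ht] at this
      simp only [Bcell] at this
      omega
    · rw [if_neg ht]
      apply val_upd_not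
      rintro ⟨j', hj', ht', he⟩
      obtain ⟨_, hjj⟩ := bcell_inj hj hj' he
      rw [← hjj] at ht'
      exact ht ht'
  have hval_p : ∀ i' : ℕ, val y (n - k + i') = val x (n - k + i') := by
    intro i'
    apply val_upd_not
    rintro ⟨j', hj', _, he⟩
    have := bcell_lt_nk (n := n) hb0m hj'
    omega
  set w' : ℕ → ℕ := fun b => if b = b0 then w b0 + 1 else w b with hw'
  have hLb0' : LBlock k y b0 (ow b0) (w b0 + 1) := by
    refine ⟨hLb0.1, hLb0.2.1, by omega, by omega, ?_⟩
    intro j hj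
    rw [hcell_b0 j hj, hLb0.2.2.2.2 j hj, hob]
    by_cases ht : ((i : ℕ)).testBit j <;> simp [ht]
  have hL' : ∀ b < L, LBlock k y b (ow b) (w' b) := by
    intro b hb
    by_cases hbe : b = b0
    · subst hbe
      simp only [hw', if_pos rfl]
      exact hLb0'
    · simp only [hw', if_neg hbe]
      exact lblock_congr (hcell_ne b hbe) (hL b hb)
  have hM' : ∀ b, L ≤ b → b < R → zeroB k y b := by
    intro b h1 h2
    exact zerob_congr (hcell_ne b (by omega)) (hM b h1 h2)
  have hR' : ∀ b, R ≤ b → b < nb n k → RBlock k y b (w' b) := by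
    intro b h1 h2
    have hbe : b ≠ b0 := by omega
    simp only [hw', if_neg hbe]
    exact rblock_congr hk (hcell_ne b hbe) (hR b h1 h2)
  have hdL' : ∀ b < L, val y (n - k + ow b) = q - 1 := by
    intro b hb
    rw [hval_p]
    exact hdL b hb
  have hdR' : R < nb n k → val y (n - k) = q - 1 := by
    intro h
    rw [show n - k = n - k + 0 from by omega, hval_p 0, ← show n - k = n - k + 0 from by omega]
    exact hdR h
  have heL' : ∀ b b', b < L → b' < L → b ≠ b' → ow b = ow b' →
      w' b = q - 1 ∨ w' b' = q - 1 := by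
    intro b b' h1 h2 h3 h4
    by_cases hbe : b = b0
    · have hbe' : b' ≠ b0 := by omega
      rcases heL b b' h1 h2 h3 h4 with h | h
      · exfalso
        rw [hbe] at h
        omega
      · right
        simp only [hw', if_neg hbe']
        exact h
    · by_cases hbe' : b' = b0
      · rcases heL b b' h1 h2 h3 h4 with h | h
        · left
          simp only [hw', if_neg hbe]
          exact h
        · exfalso
          rw [hbe'] at h
          omega
      · simp only [hw', if_neg hbe, if_neg hbe']
        exact heL b b' h1 h2 h3 h4
  have heR' : ∀ b b', R ≤ b → b < nb n k → R ≤ b' → b' < nb n k → b ≠ b' →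
      w' b = q - 1 ∨ w' b' = q - 1 := by
    intro b b' h1 h2 h3 h4 h5
    have hbe : b ≠ b0 := by omega
    have hbe' : b' ≠ b0 := by omega
    simp only [hw', if_neg hbe, if_neg hbe']
    exact heR b b' h1 h2 h3 h4 h5
  have hInvY : Inv k y := ⟨L, R, ow, w', hLR, hRm, hf, hL', hM', hR', hdL', hdR', heL', heR'⟩
  have hrsum : ∀ i' : ℕ, (∑ b ∈ Finset.Ico R (nb n k), if i' = 0 then w' b else 0)
      = ∑ b ∈ Finset.Ico R (nb n k), if i' = 0 then w b else 0 := by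
    intro i'
    apply Finset.sum_congr rfl
    intro b hb
    have hbe : b ≠ b0 := by
      have := (Finset.mem_Ico.mp hb).1
      omega
    simp only [hw', if_neg hbe]
  have hSi : S k y (i : ℕ) = S k x (i : ℕ) + 1 := by
    rw [S_eval hk hLR hRm hf hL' hM' hR' (i : ℕ), S_eval hk hLR hRm hf hL hM hR (i : ℕ),
      hrsum]
    have e1 : ∀ b ∈ Finset.range L, (if ow b = (i : ℕ) ∧ 1 ≤ (i : ℕ) then w' b else 0)
        = (if ow b = (i : ℕ) ∧ 1 ≤ (i : ℕ) then w b else 0) + (if b = b0 then 1 else 0) := by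
      intro b _
      by_cases hbe : b = b0
      · subst hbe
        rw [if_pos ⟨hob, hi1⟩, if_pos ⟨hob, hi1⟩, if_pos rfl]
        simp only [hw', if_pos rfl]
      · simp only [hw', if_neg hbe]
        omega
    rw [Finset.sum_congr rfl e1, Finset.sum_add_distrib,
      Finset.sum_ite_eq' (Finset.range L) b0 (fun _ => 1), if_pos (Finset.mem_range.mpr hb0)]
    omega
  have hSne : ∀ i' : ℕ, i' ≠ (i : ℕ) → S k y i' = S k x i' := by
    intro i' hne
    rw [S_eval hk hLR hRm hf hL' hM' hR' i', S_eval hk hLR hRm hf hL hM hR i', hrsum]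
    congr 1
    apply Finset.sum_congr rfl
    intro b _
    by_cases hbe : b = b0
    · subst hbe
      rw [hob, if_neg (fun hc => hne hc.1.symm), if_neg (fun hc => hne hc.1.symm)]
    · simp only [hw', if_neg hbe]
  have hPotY : Pot k y = Pot k x + 1 := by
    unfold Pot
    have e1 : ∀ i' ∈ Finset.range k, val y (n - k + i') = val x (n - k + i') :=
      fun i' _ => hval_p i'
    have e2 : ∀ b ∈ Finset.range (nb n k), maxB k y b
        = maxB k x b + (if b = b0 then 1 else 0) := by
      intro b _
      by_cases hbe : b = b0
      · rw [if_pos hbe, hbe, maxB_lblock hk hLb0', maxB_lblock hk hLb0]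
      · rw [if_neg hbe, maxB_congr (hcell_ne b hbe)]
        omega
    rw [Finset.sum_congr rfl e1, Finset.sum_congr rfl e2, Finset.sum_add_distrib,
      Finset.sum_ite_eq' (Finset.range (nb n k)) b0 (fun _ => 1),
      if_pos (Finset.mem_range.mpr hb0m)]
    omega
  refine ⟨y, upd_mono x _, ?_, ?_, hInvY, hPotY⟩
  · show decide _ = !decide _
    rw [show val y (n - k + (i : ℕ)) + S k y (i : ℕ)
      = (val x (n - k + (i : ℕ)) + S k x (i : ℕ)) + 1 from by rw [hval_p, hSi]; omega,
      decide_flip]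
  · intro j hji
    show decide _ = decide _
    rw [hval_p, hSne (j : ℕ) (Fin.val_ne_of_ne hji)]


lemma step_claim_left (hk : 2 ≤ k) (hq : 2 ≤ q) (hn : k < n) {x : Fin n → Fin q}
    {L R : ℕ} {ow w : ℕ → ℕ}
    (hLR : L ≤ R) (hRm : R ≤ nb n k) (hf : R < nb n k → L < R)
    (hL : ∀ b < L, LBlock k x b (ow b) (w b))
    (hM : ∀ b, L ≤ b → b < R → zeroB k x b)
    (hR : ∀ b, R ≤ b → b < nb n k → RBlock k x b (w b))
    (hdL : ∀ b < L, val x (n - k + ow b) = q - 1)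
    (hdR : R < nb n k → val x (n - k) = q - 1)
    (heL : ∀ b b', b < L → b' < L → b ≠ b' → ow b = ow b' → w b = q - 1 ∨ w b' = q - 1)
    (heR : ∀ b b', R ≤ b → b < nb n k → R ≤ b' → b' < nb n k → b ≠ b' →
      w b = q - 1 ∨ w b' = q - 1)
    (i : Fin k) (hi1 : 1 ≤ (i : ℕ)) (hpar' : val x (n - k + (i : ℕ)) = q - 1)
    (hfullL : ∀ b < L, ow b = (i : ℕ) → w b = q - 1)
    (hR2 : L + 2 ≤ R) : StepGoal x i := by
  classical
  have hLm : L < nb n k := by omega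
  have hzL : zeroB k x L := hM L le_rfl (by omega)
  set y := upd x (fun a => ∃ j', j' < cb k ∧ ((i : ℕ)).testBit j' ∧ a = L * cb k + j')
    with hy
  have hcell_ne : ∀ b, b ≠ L → ∀ j < cb k, Bcell k y b j = Bcell k x b j := by
    intro b hb j hj
    apply val_upd_not
    rintro ⟨j', hj', _, he⟩
    exact hb (bcell_inj hj hj' he).1
  have hcell_L : ∀ j < cb k, Bcell k y L j = if ((i : ℕ)).testBit j then 1 else 0 := by
    intro j hj
    by_cases ht : ((i : ℕ)).testBit j
    · rw [if_pos ht]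
      have h0 := hzL j hj
      simp only [Bcell] at h0
      have hv := val_upd_mem'
        (A := fun a => ∃ j', j' < cb k ∧ ((i : ℕ)).testBit j' ∧ a = L * cb k + j')
        (x := x) (bcell_lt_n hLm hj) ⟨j, hj, ht, rfl⟩ (by omega)
      show val y (L * cb k + j) = 1
      rw [hy, hv, h0]
    · rw [if_neg ht]
      have : Bcell k y L j = Bcell k x L j := by
        apply val_upd_not
        rintro ⟨j', hj', ht', he⟩
        obtain ⟨_, hjj⟩ := bcell_inj hj hj' he
        rw [← hjj] at ht'
        exact ht ht'
      rw [this]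
      exact hzL j hj
  have hval_p : ∀ i' : ℕ, val y (n - k + i') = val x (n - k + i') := by
    intro i'
    apply val_upd_not
    rintro ⟨j', hj', _, he⟩
    have := bcell_lt_nk (n := n) hLm hj'
    omega
  set ow' : ℕ → ℕ := fun b => if b = L then (i : ℕ) else ow b with how'
  set w' : ℕ → ℕ := fun b => if b = L then 1 else w b with hw'
  have hLnew : LBlock k y L (i : ℕ) 1 :=
    ⟨hi1, i.isLt, le_rfl, by omega, fun j hj => hcell_L j hj⟩
  have hL' : ∀ b < L + 1, LBlock k y b (ow' b) (w' b) := by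
    intro b hb
    by_cases hbe : b = L
    · simp only [how', hw', if_pos hbe, hbe]
      exact hLnew
    · simp only [how', hw', if_neg hbe]
      exact lblock_congr (hcell_ne b hbe) (hL b (by omega))
  have hM' : ∀ b, L + 1 ≤ b → b < R → zeroB k y b := by
    intro b h1 h2
    exact zerob_congr (hcell_ne b (by omega)) (hM b (by omega) h2)
  have hR' : ∀ b, R ≤ b → b < nb n k → RBlock k y b (w' b) := by
    intro b h1 h2
    have hbe : b ≠ L := by omega
    simp only [hw', if_neg hbe]
    exact rblock_congr hk (hcell_ne b hbe) (hR b h1 h2)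
  have hdL' : ∀ b < L + 1, val y (n - k + ow' b) = q - 1 := by
    intro b hb
    rw [hval_p]
    by_cases hbe : b = L
    · simp only [how', if_pos hbe]
      exact hpar'
    · simp only [how', if_neg hbe]
      exact hdL b (by omega)
  have hdR' : R < nb n k → val y (n - k) = q - 1 := by
    intro h
    rw [show n - k = n - k + 0 from by omega, hval_p 0, ← show n - k = n - k + 0 from by omega]
    exact hdR h
  have heL' : ∀ b b', b < L + 1 → b' < L + 1 → b ≠ b' → ow' b = ow' b' →
      w' b = q - 1 ∨ w' b' = q - 1 := by
    intro b b' h1 h2 h3 h4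
    by_cases hbe : b = L
    · have hbe' : b' ≠ L := by omega
      simp only [how', if_pos hbe, if_neg hbe'] at h4
      right
      simp only [hw', if_neg hbe']
      exact hfullL b' (by omega) h4.symm
    · by_cases hbe' : b' = L
      · simp only [how', if_neg hbe, if_pos hbe'] at h4
        left
        simp only [hw', if_neg hbe]
        exact hfullL b (by omega) h4
      · simp only [how', hw', if_neg hbe, if_neg hbe'] at h4 ⊢
        exact heL b b' (by omega) (by omega) h3 h4
  have heR' : ∀ b b', R ≤ b → b < nb n k → R ≤ b' → b' < nb n k → b ≠ b' →
      w' b = q - 1 ∨ w' b' = q - 1 := by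
    intro b b' h1 h2 h3 h4 h5
    have hbe : b ≠ L := by omega
    have hbe' : b' ≠ L := by omega
    simp only [hw', if_neg hbe, if_neg hbe']
    exact heR b b' h1 h2 h3 h4 h5
  have hInvY : Inv k y :=
    ⟨L + 1, R, ow', w', by omega, hRm, fun _ => by omega, hL', hM', hR', hdL', hdR', heL', heR'⟩
  have hrsum : ∀ i' : ℕ, (∑ b ∈ Finset.Ico R (nb n k), if i' = 0 then w' b else 0)
      = ∑ b ∈ Finset.Ico R (nb n k), if i' = 0 then w b else 0 := by
    intro i'
    apply Finset.sum_congr rfl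
    intro b hb
    have hbe : b ≠ L := by
      have := (Finset.mem_Ico.mp hb).1
      omega
    simp only [hw', if_neg hbe]
  have hlsum : ∀ i' : ℕ, (∑ b ∈ Finset.range L, if ow' b = i' ∧ 1 ≤ i' then w' b else 0)
      = ∑ b ∈ Finset.range L, if ow b = i' ∧ 1 ≤ i' then w b else 0 := by
    intro i'
    apply Finset.sum_congr rfl
    intro b hb
    have hbe : b ≠ L := by
      have := Finset.mem_range.mp hb
      omega
    simp only [how', hw', if_neg hbe]
  have hSeval : ∀ i' : ℕ, S k y i'
      = (∑ b ∈ Finset.range L, if ow b = i' ∧ 1 ≤ i' then w b else 0)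
        + (if (i : ℕ) = i' ∧ 1 ≤ i' then 1 else 0)
        + ∑ b ∈ Finset.Ico R (nb n k), if i' = 0 then w b else 0 := by
    intro i'
    rw [S_eval hk (by omega) hRm (fun _ => by omega) hL' hM' hR' i',
      Finset.sum_range_succ, hrsum, hlsum]
    simp only [how', hw', if_pos rfl]
  have hSi : S k y (i : ℕ) = S k x (i : ℕ) + 1 := by
    rw [hSeval, S_eval hk hLR hRm hf hL hM hR (i : ℕ), if_pos ⟨rfl, hi1⟩]
    omega
  have hSne : ∀ i' : ℕ, i' ≠ (i : ℕ) → S k y i' = S k x i' := by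
    intro i' hne
    rw [hSeval, S_eval hk hLR hRm hf hL hM hR i', if_neg (fun hc => hne hc.1.symm)]
    omega
  have hPotY : Pot k y = Pot k x + 1 := by
    unfold Pot
    have e1 : ∀ i' ∈ Finset.range k, val y (n - k + i') = val x (n - k + i') :=
      fun i' _ => hval_p i'
    have e2 : ∀ b ∈ Finset.range (nb n k), maxB k y b
        = maxB k x b + (if b = L then 1 else 0) := by
      intro b _
      by_cases hbe : b = L
      · rw [if_pos hbe, hbe, maxB_lblock hk hLnew, maxB_zero hzL]
      · rw [if_neg hbe, maxB_congr (hcell_ne b hbe)]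
        omega
    rw [Finset.sum_congr rfl e1, Finset.sum_congr rfl e2, Finset.sum_add_distrib,
      Finset.sum_ite_eq' (Finset.range (nb n k)) L (fun _ => 1),
      if_pos (Finset.mem_range.mpr hLm)]
    omega
  refine ⟨y, upd_mono x _, ?_, ?_, hInvY, hPotY⟩
  · show decide _ = !decide _
    rw [show val y (n - k + (i : ℕ)) + S k y (i : ℕ)
      = (val x (n - k + (i : ℕ)) + S k x (i : ℕ)) + 1 from by rw [hval_p, hSi]; omega,
      decide_flip]
  · intro j hji
    show decide _ = decide _
    rw [hval_p, hSne (j : ℕ) (Fin.val_ne_of_ne hji)]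


lemma step_bump_right (hk : 2 ≤ k) (hq : 2 ≤ q) (hn : k < n) {x : Fin n → Fin q}
    {L R : ℕ} {ow w : ℕ → ℕ}
    (hLR : L ≤ R) (hRm : R ≤ nb n k) (hf : R < nb n k → L < R)
    (hL : ∀ b < L, LBlock k x b (ow b) (w b))
    (hM : ∀ b, L ≤ b → b < R → zeroB k x b)
    (hR : ∀ b, R ≤ b → b < nb n k → RBlock k x b (w b))
    (hdL : ∀ b < L, val x (n - k + ow b) = q - 1)
    (hdR : R < nb n k → val x (n - k) = q - 1)
    (heL : ∀ b b', b < L → b' < L → b ≠ b' → ow b = ow b' → w b = q - 1 ∨ w b' = q - 1)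
    (heR : ∀ b b', R ≤ b → b < nb n k → R ≤ b' → b' < nb n k → b ≠ b' →
      w b = q - 1 ∨ w b' = q - 1)
    (i : Fin k) (hi0 : (i : ℕ) = 0) {b0 : ℕ} (hb0R : R ≤ b0) (hb0m : b0 < nb n k)
    (hwb : w b0 < q - 1) : StepGoal x i := by
  classical
  have hRb0 := hR b0 hb0R hb0m
  set y := upd x (fun a => a = b0 * cb k) with hy
  have hcell_ne : ∀ b, b ≠ b0 → ∀ j < cb k, Bcell k y b j = Bcell k x b j := by
    intro b hb j hj
    apply val_upd_not
    intro he
    have : b = b0 ∧ j = 0 := bcell_inj hj (cb_pos hk) (by omega)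
    exact hb this.1
  have hcell_b00 : Bcell k y b0 0 = w b0 + 1 := by
    have h0 := hRb0.2.2.1
    simp only [Bcell] at h0 ⊢
    rw [Nat.add_zero] at h0 ⊢
    have hlt : b0 * cb k < n := by
      have := bcell_lt_n (n := n) (k := k) hb0m (cb_pos hk)
      omega
    rw [hy, val_upd_mem' (A := fun a => a = b0 * cb k) hlt rfl (by omega), h0]
  have hcell_b0j : ∀ j, 0 < j → j < cb k → Bcell k y b0 j = Bcell k x b0 j := by
    intro j hj0 hj
    apply val_upd_not
    intro he
    omega
  have hval_p : ∀ i' : ℕ, val y (n - k + i') = val x (n - k + i') := by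
    intro i'
    apply val_upd_not
    intro he
    have := bcell_lt_nk (n := n) hb0m (cb_pos hk)
    omega
  set w' : ℕ → ℕ := fun b => if b = b0 then w b0 + 1 else w b with hw'
  have hRb0' : RBlock k y b0 (w b0 + 1) :=
    ⟨by omega, by omega, hcell_b00, fun j hj0 hj => by rw [hcell_b0j j hj0 hj]; exact hRb0.2.2.2 j hj0 hj⟩
  have hL' : ∀ b < L, LBlock k y b (ow b) (w' b) := by
    intro b hb
    have hbe : b ≠ b0 := by omega
    simp only [hw', if_neg hbe]
    exact lblock_congr (hcell_ne b hbe) (hL b hb)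
  have hM' : ∀ b, L ≤ b → b < R → zeroB k y b := by
    intro b h1 h2
    exact zerob_congr (hcell_ne b (by omega)) (hM b h1 h2)
  have hR' : ∀ b, R ≤ b → b < nb n k → RBlock k y b (w' b) := by
    intro b h1 h2
    by_cases hbe : b = b0
    · simp only [hw', if_pos hbe, hbe]
      exact hRb0'
    · simp only [hw', if_neg hbe]
      exact rblock_congr hk (hcell_ne b hbe) (hR b h1 h2)
  have hdL' : ∀ b < L, val y (n - k + ow b) = q - 1 := by
    intro b hb
    rw [hval_p]
    exact hdL b hb
  have hdR' : R < nb n k → val y (n - k) = q - 1 := by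
    intro h
    rw [show n - k = n - k + 0 from by omega, hval_p 0, ← show n - k = n - k + 0 from by omega]
    exact hdR h
  have heL' : ∀ b b', b < L → b' < L → b ≠ b' → ow b = ow b' →
      w' b = q - 1 ∨ w' b' = q - 1 := by
    intro b b' h1 h2 h3 h4
    have hbe : b ≠ b0 := by omega
    have hbe' : b' ≠ b0 := by omega
    simp only [hw', if_neg hbe, if_neg hbe']
    exact heL b b' h1 h2 h3 h4
  have heR' : ∀ b b', R ≤ b → b < nb n k → R ≤ b' → b' < nb n k → b ≠ b' →
      w' b = q - 1 ∨ w' b' = q - 1 := by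
    intro b b' h1 h2 h3 h4 h5
    by_cases hbe : b = b0
    · have hbe' : b' ≠ b0 := by omega
      rcases heR b b' h1 h2 h3 h4 h5 with h | h
      · exfalso
        rw [hbe] at h
        omega
      · right
        simp only [hw', if_neg hbe']
        exact h
    · by_cases hbe' : b' = b0
      · rcases heR b b' h1 h2 h3 h4 h5 with h | h
        · left
          simp only [hw', if_neg hbe]
          exact h
        · exfalso
          rw [hbe'] at h
          omega
      · simp only [hw', if_neg hbe, if_neg hbe']
        exact heR b b' h1 h2 h3 h4 h5
  have hInvY : Inv k y := ⟨L, R, ow, w', hLR, hRm, hf, hL', hM', hR', hdL', hdR', heL', heR'⟩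
  have hlsum : ∀ i' : ℕ, (∑ b ∈ Finset.range L, if ow b = i' ∧ 1 ≤ i' then w' b else 0)
      = ∑ b ∈ Finset.range L, if ow b = i' ∧ 1 ≤ i' then w b else 0 := by
    intro i'
    apply Finset.sum_congr rfl
    intro b hb
    have hbe : b ≠ b0 := by
      have := Finset.mem_range.mp hb
      omega
    simp only [hw', if_neg hbe]
  have hS0 : S k y 0 = S k x 0 + 1 := by
    rw [S_eval hk hLR hRm hf hL' hM' hR' 0, S_eval hk hLR hRm hf hL hM hR 0, hlsum]
    have e1 : ∀ b ∈ Finset.Ico R (nb n k), (if (0 : ℕ) = 0 then w' b else 0)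
        = (if (0 : ℕ) = 0 then w b else 0) + (if b = b0 then 1 else 0) := by
      intro b _
      simp only [if_pos rfl]
      by_cases hbe : b = b0
      · simp [hw', hbe]
      · simp only [hw', if_neg hbe]
        omega
    rw [Finset.sum_congr rfl e1, Finset.sum_add_distrib,
      Finset.sum_ite_eq' (Finset.Ico R (nb n k)) b0 (fun _ => 1),
      if_pos (Finset.mem_Ico.mpr ⟨hb0R, hb0m⟩)]
    omega
  have hSne : ∀ i' : ℕ, i' ≠ 0 → S k y i' = S k x i' := by
    intro i' hne
    rw [S_eval hk hLR hRm hf hL' hM' hR' i', S_eval hk hLR hRm hf hL hM hR i', hlsum]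
    congr 1
    apply Finset.sum_congr rfl
    intro b _
    rw [if_neg hne, if_neg hne]
  have hPotY : Pot k y = Pot k x + 1 := by
    unfold Pot
    have e1 : ∀ i' ∈ Finset.range k, val y (n - k + i') = val x (n - k + i') :=
      fun i' _ => hval_p i'
    have e2 : ∀ b ∈ Finset.range (nb n k), maxB k y b
        = maxB k x b + (if b = b0 then 1 else 0) := by
      intro b _
      by_cases hbe : b = b0
      · rw [if_pos hbe, hbe, maxB_rblock hk hRb0', maxB_rblock hk hRb0]
      · rw [if_neg hbe, maxB_congr (hcell_ne b hbe)]
        omega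
    rw [Finset.sum_congr rfl e1, Finset.sum_congr rfl e2, Finset.sum_add_distrib,
      Finset.sum_ite_eq' (Finset.range (nb n k)) b0 (fun _ => 1),
      if_pos (Finset.mem_range.mpr hb0m)]
    omega
  refine ⟨y, upd_mono x _, ?_, ?_, hInvY, hPotY⟩
  · show decide _ = !decide _
    rw [show val y (n - k + (i : ℕ)) + S k y (i : ℕ)
      = (val x (n - k + (i : ℕ)) + S k x (i : ℕ)) + 1 from by rw [hval_p, hi0, hS0]; omega,
      decide_flip]
  · intro j hji
    show decide _ = decide _
    have hjne : (j : ℕ) ≠ 0 := by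
      have := Fin.val_ne_of_ne hji
      omega
    rw [hval_p, hSne (j : ℕ) hjne]

lemma step_claim_right (hk : 2 ≤ k) (hq : 2 ≤ q) (hn : k < n) {x : Fin n → Fin q}
    {L R : ℕ} {ow w : ℕ → ℕ}
    (hLR : L ≤ R) (hRm : R ≤ nb n k) (hf : R < nb n k → L < R)
    (hL : ∀ b < L, LBlock k x b (ow b) (w b))
    (hM : ∀ b, L ≤ b → b < R → zeroB k x b)
    (hR : ∀ b, R ≤ b → b < nb n k → RBlock k x b (w b))
    (hdL : ∀ b < L, val x (n - k + ow b) = q - 1)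
    (hdR : R < nb n k → val x (n - k) = q - 1)
    (heL : ∀ b b', b < L → b' < L → b ≠ b' → ow b = ow b' → w b = q - 1 ∨ w b' = q - 1)
    (heR : ∀ b b', R ≤ b → b < nb n k → R ≤ b' → b' < nb n k → b ≠ b' →
      w b = q - 1 ∨ w b' = q - 1)
    (i : Fin k) (hi0 : (i : ℕ) = 0) (hpar' : val x (n - k + (i : ℕ)) = q - 1)
    (hfullR : ∀ b, R ≤ b → b < nb n k → w b = q - 1)
    (hR2 : L + 2 ≤ R) : StepGoal x i := by
  classical
  have hb0m : R - 1 < nb n k := by omega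
  have hzb0 : zeroB k x (R - 1) := hM (R - 1) (by omega) (by omega)
  set y := upd x (fun a => a = (R - 1) * cb k) with hy
  have hcell_ne : ∀ b, b ≠ R - 1 → ∀ j < cb k, Bcell k y b j = Bcell k x b j := by
    intro b hb j hj
    apply val_upd_not
    intro he
    have : b = R - 1 ∧ j = 0 := bcell_inj hj (cb_pos hk) (by omega)
    exact hb this.1
  have hcell_b00 : Bcell k y (R - 1) 0 = 1 := by
    have h0 := hzb0 0 (cb_pos hk)
    simp only [Bcell] at h0 ⊢
    rw [Nat.add_zero] at h0 ⊢
    have hlt : (R - 1) * cb k < n := by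
      have := bcell_lt_n (n := n) (k := k) hb0m (cb_pos hk)
      omega
    rw [hy, val_upd_mem' (A := fun a => a = (R - 1) * cb k) hlt rfl (by omega), h0]
  have hcell_b0j : ∀ j, 0 < j → j < cb k → Bcell k y (R - 1) j = Bcell k x (R - 1) j := by
    intro j hj0 hj
    apply val_upd_not
    intro he
    omega
  have hval_p : ∀ i' : ℕ, val y (n - k + i') = val x (n - k + i') := by
    intro i'
    apply val_upd_not
    intro he
    have := bcell_lt_nk (n := n) hb0m (cb_pos hk)
    omega
  set w' : ℕ → ℕ := fun b => if b = R - 1 then 1 else w b with hw'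
  have hRnew : RBlock k y (R - 1) 1 :=
    ⟨le_rfl, by omega, hcell_b00,
      fun j hj0 hj => by rw [hcell_b0j j hj0 hj]; exact hzb0 j hj⟩
  have hL' : ∀ b < L, LBlock k y b (ow b) (w' b) := by
    intro b hb
    have hbe : b ≠ R - 1 := by omega
    simp only [hw', if_neg hbe]
    exact lblock_congr (hcell_ne b hbe) (hL b hb)
  have hM' : ∀ b, L ≤ b → b < R - 1 → zeroB k y b := by
    intro b h1 h2
    exact zerob_congr (hcell_ne b (by omega)) (hM b h1 (by omega))
  have hR' : ∀ b, R - 1 ≤ b → b < nb n k → RBlock k y b (w' b) := by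
    intro b h1 h2
    by_cases hbe : b = R - 1
    · simp only [hw', if_pos hbe, hbe]
      exact hRnew
    · simp only [hw', if_neg hbe]
      exact rblock_congr hk (hcell_ne b hbe) (hR b (by omega) h2)
  have hdL' : ∀ b < L, val y (n - k + ow b) = q - 1 := by
    intro b hb
    rw [hval_p]
    exact hdL b hb
  have hdR' : R - 1 < nb n k → val y (n - k) = q - 1 := by
    intro _
    rw [show n - k = n - k + 0 from by omega, hval_p 0]
    rw [hi0] at hpar'
    exact hpar'
  have heL' : ∀ b b', b < L → b' < L → b ≠ b' → ow b = ow b' →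
      w' b = q - 1 ∨ w' b' = q - 1 := by
    intro b b' h1 h2 h3 h4
    have hbe : b ≠ R - 1 := by omega
    have hbe' : b' ≠ R - 1 := by omega
    simp only [hw', if_neg hbe, if_neg hbe']
    exact heL b b' h1 h2 h3 h4
  have heR' : ∀ b b', R - 1 ≤ b → b < nb n k → R - 1 ≤ b' → b' < nb n k → b ≠ b' →
      w' b = q - 1 ∨ w' b' = q - 1 := by
    intro b b' h1 h2 h3 h4 h5
    by_cases hbe : b = R - 1
    · have hbe' : b' ≠ R - 1 := by omega
      right
      simp only [hw', if_neg hbe']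
      exact hfullR b' (by omega) h4
    · by_cases hbe' : b' = R - 1
      · left
        simp only [hw', if_neg hbe]
        exact hfullR b (by omega) h2
      · simp only [hw', if_neg hbe, if_neg hbe']
        exact heR b b' (by omega) h2 (by omega) h4 h5
  have hInvY : Inv k y :=
    ⟨L, R - 1, ow, w', by omega, by omega, fun _ => by omega,
      hL', hM', hR', hdL', hdR', heL', heR'⟩
  have hlsum : ∀ i' : ℕ, (∑ b ∈ Finset.range L, if ow b = i' ∧ 1 ≤ i' then w' b else 0)
      = ∑ b ∈ Finset.range L, if ow b = i' ∧ 1 ≤ i' then w b else 0 := by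
    intro i'
    apply Finset.sum_congr rfl
    intro b hb
    have hbe : b ≠ R - 1 := by
      have := Finset.mem_range.mp hb
      omega
    simp only [hw', if_neg hbe]
  have hSeval : ∀ i' : ℕ, S k y i'
      = (∑ b ∈ Finset.range L, if ow b = i' ∧ 1 ≤ i' then w b else 0)
        + ((if i' = 0 then 1 else 0)
          + ∑ b ∈ Finset.Ico R (nb n k), if i' = 0 then w b else 0) := by
    intro i'
    rw [S_eval hk (by omega) (by omega) (fun _ => by omega) hL' hM' hR' i', hlsum]
    congr 1
    rw [Finset.sum_eq_sum_Ico_succ_bot (by omega : R - 1 < nb n k), show R - 1 + 1 = R from by omega]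
    congr 1
    · by_cases hz : i' = 0
      · rw [if_pos hz, if_pos hz]
        simp only [hw', if_pos rfl]
      · rw [if_neg hz, if_neg hz]
    · apply Finset.sum_congr rfl
      intro b hb
      have hbe : b ≠ R - 1 := by
        have := (Finset.mem_Ico.mp hb).1
        omega
      simp only [hw', if_neg hbe]
  have hS0 : S k y 0 = S k x 0 + 1 := by
    rw [hSeval, S_eval hk hLR hRm hf hL hM hR 0, if_pos rfl]
    omega
  have hSne : ∀ i' : ℕ, i' ≠ 0 → S k y i' = S k x i' := by
    intro i' hne
    rw [hSeval, S_eval hk hLR hRm hf hL hM hR i', if_neg hne]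
    omega
  have hPotY : Pot k y = Pot k x + 1 := by
    unfold Pot
    have e1 : ∀ i' ∈ Finset.range k, val y (n - k + i') = val x (n - k + i') :=
      fun i' _ => hval_p i'
    have e2 : ∀ b ∈ Finset.range (nb n k), maxB k y b
        = maxB k x b + (if b = R - 1 then 1 else 0) := by
      intro b _
      by_cases hbe : b = R - 1
      · rw [if_pos hbe, hbe, maxB_rblock hk hRnew, maxB_zero hzb0]
      · rw [if_neg hbe, maxB_congr (hcell_ne b hbe)]
        omega
    rw [Finset.sum_congr rfl e1, Finset.sum_congr rfl e2, Finset.sum_add_distrib,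
      Finset.sum_ite_eq' (Finset.range (nb n k)) (R - 1) (fun _ => 1),
      if_pos (Finset.mem_range.mpr hb0m)]
    omega
  refine ⟨y, upd_mono x _, ?_, ?_, hInvY, hPotY⟩
  · show decide _ = !decide _
    rw [show val y (n - k + (i : ℕ)) + S k y (i : ℕ)
      = (val x (n - k + (i : ℕ)) + S k x (i : ℕ)) + 1 from by rw [hval_p, hi0, hS0]; omega,
      decide_flip]
  · intro j hji
    show decide _ = decide _
    have hjne : (j : ℕ) ≠ 0 := by
      have := Fin.val_ne_of_ne hji
      omega
    rw [hval_p, hSne (j : ℕ) hjne]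


lemma stepEx (hk : 2 ≤ k) (hq : 2 ≤ q) (hn : k < n) (x : Fin n → Fin q) (i : Fin k)
    (hInv : Inv k x) (hPot : Pot k x + 1 ≤ tW n k q) : StepGoal x i := by
  classical
  obtain ⟨L, R, ow, w, hLR, hRm, hf, hL, hM, hR, hdL, hdR, heL, heR⟩ := hInv
  by_cases hpar : val x (n - k + (i : ℕ)) < q - 1
  · exact step_parity hk hq hn hLR hRm hf hL hM hR hdL hdR heL heR i hpar
  · have hpar' : val x (n - k + (i : ℕ)) = q - 1 := by
      have := val_le x (n - k + (i : ℕ))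
      omega
    by_cases hi0 : (i : ℕ) = 0
    · by_cases hbump : ∃ b, R ≤ b ∧ b < nb n k ∧ w b < q - 1
      · obtain ⟨b0, h1, h2, h3⟩ := hbump
        exact step_bump_right hk hq hn hLR hRm hf hL hM hR hdL hdR heL heR i hi0 h1 h2 h3
      · push_neg at hbump
        have hfullR : ∀ b, R ≤ b → b < nb n k → w b = q - 1 := by
          intro b h1 h2
          have h3 := (hR b h1 h2).2.1
          have h4 := hbump b h1 h2
          omega
        have hfull : ∀ b, ((1 ≤ (i : ℕ) ∧ b < L ∧ ow b = (i : ℕ))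
            ∨ ((i : ℕ) = 0 ∧ R ≤ b ∧ b < nb n k)) → w b = q - 1 := by
          intro b hb
          rcases hb with ⟨h1, _, _⟩ | ⟨_, h1, h2⟩
          · omega
          · exact hfullR b h1 h2
        have hR2 : L + 2 ≤ R := by
          by_contra hcon
          have := accounting hk hq hLR hRm hL hM hR hdL hdR heL heR i.isLt hpar' hfull
            (by omega)
          unfold tW at hPot
          omega
        exact step_claim_right hk hq hn hLR hRm hf hL hM hR hdL hdR heL heR i hi0 hpar'
          hfullR hR2
    · have hi1 : 1 ≤ (i : ℕ) := by omega
      by_cases hbump : ∃ b, b < L ∧ ow b = (i : ℕ) ∧ w b < q - 1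
      · obtain ⟨b0, h1, h2, h3⟩ := hbump
        exact step_bump_left hk hq hn hLR hRm hf hL hM hR hdL hdR heL heR i hi1 h1 h2 h3
      · push_neg at hbump
        have hfullL : ∀ b < L, ow b = (i : ℕ) → w b = q - 1 := by
          intro b h1 h2
          have h3 := (hL b h1).2.2.2.1
          have h4 := hbump b h1 h2
          omega
        have hfull : ∀ b, ((1 ≤ (i : ℕ) ∧ b < L ∧ ow b = (i : ℕ))
            ∨ ((i : ℕ) = 0 ∧ R ≤ b ∧ b < nb n k)) → w b = q - 1 := by
          intro b hb
          rcases hb with ⟨_, h1, h2⟩ | ⟨h1, _, _⟩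
          · exact hfullL b h1 h2
          · omega
        have hR2 : L + 2 ≤ R := by
          by_contra hcon
          have := accounting hk hq hLR hRm hL hM hR hdL hdR heL heR i.isLt hpar' hfull
            (by omega)
          unfold tW at hPot
          omega
        exact step_claim_left hk hq hn hLR hRm hf hL hM hR hdL hdR heL heR i hi1 hpar'
          hfullL hR2

lemma val_of_zero {x : Fin n → Fin q} (hz : ∀ j, (x j : ℕ) = 0) : ∀ a, val x a = 0 := by
  intro a
  unfold val
  split
  · exact hz _
  · rfl

lemma inv_zero {x : Fin n → Fin q} (hz : ∀ j, (x j : ℕ) = 0) : Inv k x := by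
  have hv := val_of_zero hz
  refine ⟨0, nb n k, fun _ => 0, fun _ => 0, by omega, le_rfl, by omega, ?_, ?_, ?_, ?_, ?_, ?_, ?_⟩
  · intro b hb
    omega
  · intro b _ _ j _
    exact hv _
  · intro b h1 h2
    omega
  · intro b hb
    omega
  · intro h
    omega
  · intro b b' h1 h2 h3 h4
    omega
  · intro b b' h1 h2 h3 h4 h5
    omega

lemma pot_zero {x : Fin n → Fin q} (hz : ∀ j, (x j : ℕ) = 0) : Pot k x = 0 := by
  have hv := val_of_zero hz
  unfold Pot
  rw [Finset.sum_eq_zero (fun i' _ => hv _),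
    Finset.sum_eq_zero (fun b _ => maxB_zero (fun j _ => hv _))]
  rfl

lemma dec_zero {x : Fin n → Fin q} (hz : ∀ j, (x j : ℕ) = 0) :
    Dec k x = fun _ => false := by
  have hv := val_of_zero hz
  funext i
  show decide _ = false
  have hS : S k x (i : ℕ) = 0 := by
    apply Finset.sum_eq_zero
    intro b _
    rw [maxB_zero (fun j _ => hv _)]
    exact ite_self 0
  rw [hv, hS]
  norm_num

lemma canwrite (hk : 2 ≤ k) (hq : 2 ≤ q) (hn : k < n) :
    ∀ (l : List (Fin k)) (x : Fin n → Fin q), Inv k x →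
      Pot k x + l.length ≤ tW n k q → CanWrite (Enc n k q) x l := by
  intro l
  induction l with
  | nil => intro x _ _; trivial
  | cons i l ih =>
    intro x hInv hlen
    rw [List.length_cons] at hlen
    have hstep := stepEx hk hq hn x i hInv (by omega)
    have hex : ∃ y, (∀ j, x j ≤ y j) ∧ Dec k y i = !Dec k x i ∧
        (∀ j, j ≠ i → Dec k y j = Dec k x j) ∧
        ((Inv k x ∧ Pot k x + 1 ≤ tW n k q) → (Inv k y ∧ Pot k y = Pot k x + 1)) := by
      obtain ⟨y, h1, h2, h3, h4, h5⟩ := hstep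
      exact ⟨y, h1, h2, h3, fun _ => ⟨h4, h5⟩⟩
    refine ⟨hex.choose, ?_, ?_⟩
    · unfold Enc
      rw [dif_pos hex]
    · have hspec := hex.choose_spec
      obtain ⟨hInvY, hPotY⟩ := hspec.2.2.2 ⟨hInv, by omega⟩
      exact ih hex.choose hInvY (by omega)

lemma enc_isFlashCode (hk : 2 ≤ k) (hq : 2 ≤ q) (hn : k < n) :
    IsFlashCode (Dec k (n := n) (q := q)) (Enc n k q) := by
  constructor
  · intro x hx
    exact dec_zero hx
  · intro i x y hE j
    unfold Enc at hE
    split at hE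
    · rename_i h
      rw [Option.some.injEq] at hE
      rw [← hE]
      exact (h.choose_spec).1 j
    · exact absurd hE (by simp)
  · intro i x y hE
    unfold Enc at hE
    split at hE
    · rename_i h
      rw [Option.some.injEq] at hE
      rw [← hE]
      exact (h.choose_spec).2.1
    · exact absurd hE (by simp)
  · intro i x y hE j hji
    unfold Enc at hE
    split at hE
    · rename_i h
      rw [Option.some.injEq] at hE
      rw [← hE]
      exact (h.choose_spec).2.2.1 j hji
    · exact absurd hE (by simp)

lemma enc_guarantees (hk : 2 ≤ k) (hq : 2 ≤ q) (hn : k < n) :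
    Guarantees (Enc n k q) (tW n k q) := by
  intro x hx l hl
  apply canwrite hk hq hn l x (inv_zero hx)
  rw [pot_zero hx]
  omega

end Helpers

end FC

end


/-- For `k ≥ 2`, `q ≥ 2`, `n > k`, there exists an `(n,k)_q` flash code guaranteeing at
least `t = (q-1)·⌊(n-k)/⌈log₂ k⌉⌋` writes (index group of `n-k` cells split into
`⌊(n-k)/⌈log₂ k⌉⌋` index blocks, parity group of `k` cells, `q-1` phases). -/
theorem exists_flash_code_constant_rate
    (n k q : ℕ) (hk : 2 ≤ k) (hq : 2 ≤ q) (hn : k < n) :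
    ∃ (D : (Fin n → Fin q) → (Fin k → Bool))
      (E : Fin k → (Fin n → Fin q) → Option (Fin n → Fin q)),
      IsFlashCode D E ∧ Guarantees E ((q - 1) * ((n - k) / Nat.clog 2 k)) := by
  exact ⟨FC.Dec k, FC.Enc n k q, FC.enc_isFlashCode hk hq hn, FC.enc_guarantees hk hq hn⟩
end

section
/- Let ℓ ≥ 2, r ≥ 1, and q ≥ ℓ^r be integers. Then ⌊(q − ℓ^r)·r / (∑_{d ∣ r} φ(r/d)·ℓ^d)⌋ + r ≤ ⌊(q−1)/(ℓ^r − 1)⌋·r + ⌊log_ℓ(((q−1) mod (ℓ^r − 1)) + 1)⌋, where φ is Euler's totient function, the sum ranges over positive divisors d of r, and log_ℓ denotes the integer logarithm base ℓ (⌊log_ℓ m⌋ is the largest e with ℓ^e ≤ m). That is, the new upper bound on the number of writes of a single-cell buffer code is at most the previously known upper bound. -/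
lemma aux_pow_buffer (l j r : ℕ) (hl : 2 ≤ l) (hj : 1 ≤ j) (hjr : j ≤ r) :
    r * l ^ j ≤ j * l ^ r := by
  induction r, hjr using Nat.le_induction with
  | base => exact le_of_eq (by ring)
  | succ n hn ih =>
    have h1 : l ^ j ≤ l ^ n := Nat.pow_le_pow_right (by omega) hn
    have h4 : l ^ n ≤ j * l ^ n := Nat.le_mul_of_pos_left _ (by omega)
    calc (n + 1) * l ^ j = n * l ^ j + l ^ j := by ring
      _ ≤ j * l ^ n + j * l ^ n := Nat.add_le_add ih (le_trans h1 h4)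
      _ = j * l ^ n * 2 := by ring
      _ ≤ j * l ^ n * l := Nat.mul_le_mul_left _ hl
      _ = j * l ^ (n + 1) := by ring

/-- The new upper bound on the number of writes of a single-cell buffer code is at most
the previously known upper bound: for `ℓ ≥ 2`, `r ≥ 1`, `q ≥ ℓ^r`,
`⌊(q - ℓ^r)·r / (∑_{d ∣ r} φ(r/d)·ℓ^d)⌋ + r ≤ ⌊(q-1)/(ℓ^r-1)⌋·r + ⌊log_ℓ(((q-1) mod (ℓ^r-1)) + 1)⌋`. -/
theorem buffer_bound_improves
    (l r q : ℕ) (hl : 2 ≤ l) (hr : 1 ≤ r) (hq : l ^ r ≤ q) :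
    (q - l ^ r) * r / (∑ d ∈ r.divisors, Nat.totient (r / d) * l ^ d) + r ≤
      (q - 1) / (l ^ r - 1) * r + Nat.log l ((q - 1) % (l ^ r - 1) + 1) := by
  set S := ∑ d ∈ r.divisors, Nat.totient (r / d) * l ^ d with hS
  have hlr : 2 ≤ l ^ r := le_trans hl (Nat.le_self_pow (by omega) l)
  have hSge : l ^ r ≤ S := by
    have hmem : r ∈ r.divisors := Nat.mem_divisors_self r (by omega)
    calc l ^ r = Nat.totient (r / r) * l ^ r := by
          rw [Nat.div_self (by omega), Nat.totient_one, one_mul]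
      _ ≤ S := Finset.single_le_sum (f := fun d => Nat.totient (r / d) * l ^ d)
            (fun d _ => Nat.zero_le _) hmem
  have hSpos : 0 < S := by omega
  set M := l ^ r - 1 with hM
  have hMpos : 0 < M := by omega
  set k := (q - 1) / M with hk
  set s := (q - 1) % M with hs
  have hdecomp : q - 1 = k * M + s := by
    rw [Nat.mul_comm]; exact (Nat.div_add_mod (q - 1) M).symm
  have hsM : s < M := Nat.mod_lt _ hMpos
  have hk1 : 1 ≤ k := by
    rw [hk]
    exact (Nat.one_le_div_iff hMpos).mpr (by omega)
  have hkM : M ≤ k * M := Nat.le_mul_of_pos_left M hk1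
  have hkM' : (k - 1) * M = k * M - M := by rw [Nat.sub_mul, one_mul]
  have hq' : q - l ^ r = (k - 1) * M + s := by omega
  set e := Nat.log l (s + 1) with he
  have heR : e + 1 ≤ r := by
    have : Nat.log l (s + 1) < r := Nat.log_lt_of_lt_pow (by omega) (by omega)
    omega
  have hsle : s + 2 ≤ l ^ (e + 1) := by
    have h := Nat.lt_pow_succ_log_self (by omega : 1 < l) (s + 1)
    rw [Nat.succ_eq_add_one, ← he] at h
    omega
  have hkey : s * r < (e + 1) * l ^ r := by
    have h1 : r * l ^ (e + 1) ≤ (e + 1) * l ^ r :=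
      aux_pow_buffer l (e + 1) r hl (by omega) heR
    have h2 : s * r + 2 * r ≤ l ^ (e + 1) * r := by
      calc s * r + 2 * r = (s + 2) * r := by ring
        _ ≤ l ^ (e + 1) * r := Nat.mul_le_mul_right r hsle
    have h3 : l ^ (e + 1) * r = r * l ^ (e + 1) := by ring
    omega
  have hmain : (q - l ^ r) * r < ((k - 1) * r + e + 1) * S := by
    have hA : (k - 1) * M * r ≤ (k - 1) * r * l ^ r := by
      calc (k - 1) * M * r ≤ (k - 1) * l ^ r * r :=
            Nat.mul_le_mul_right r (Nat.mul_le_mul_left _ (by omega))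
        _ = (k - 1) * r * l ^ r := by ring
    calc (q - l ^ r) * r = (k - 1) * M * r + s * r := by rw [hq']; ring
      _ < (k - 1) * r * l ^ r + (e + 1) * l ^ r := by omega
      _ = ((k - 1) * r + e + 1) * l ^ r := by ring
      _ ≤ ((k - 1) * r + e + 1) * S := Nat.mul_le_mul_left _ hSge
  have hdiv : (q - l ^ r) * r / S ≤ (k - 1) * r + e := by
    have := (Nat.div_lt_iff_lt_mul hSpos).mpr hmain
    omega
  have hlast : (k - 1) * r + r = k * r := by
    have h5 : (k - 1) * r = k * r - r := by rw [Nat.sub_mul, one_mul]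
    have h6 : r ≤ k * r := Nat.le_mul_of_pos_left r hk1
    omega
  omega
end

section
/- Let ℓ ≥ 2 and r ≥ 1 be integers, and let z be an integer with 1 ≤ z ≤ ℓ^r. Then ⌊z·r / ℓ^r⌋ ≤ ⌊log_ℓ z⌋, where ⌊log_ℓ z⌋ is the largest natural number e with ℓ^e ≤ z. -/
/-- For `ℓ ≥ 2`, `r ≥ 1` and `1 ≤ z ≤ ℓ^r`: `⌊z·r / ℓ^r⌋ ≤ ⌊log_ℓ z⌋`. -/
theorem div_le_log
    (l r z : ℕ) (hl : 2 ≤ l) (hr : 1 ≤ r) (hz1 : 1 ≤ z) (hz2 : z ≤ l ^ r) :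
    z * r / l ^ r ≤ Nat.log l z := by
  set k := z * r / l ^ r with hk
  rw [Nat.le_log_iff_pow_le hl (by omega)]
  rcases Nat.eq_zero_or_pos k with h0 | hkpos
  · simpa [h0] using hz1
  have hkr : k ≤ r := by
    calc k ≤ l ^ r * r / l ^ r := Nat.div_le_div_right (by nlinarith)
    _ = r := Nat.mul_div_cancel_left r (pow_pos (by omega) _)
  have h1 : k * l ^ r ≤ z * r := Nat.div_mul_le_self _ _
  have h2 : r * l ^ k ≤ k * l ^ r := by
    have hsplit : l ^ r = l ^ k * l ^ (r - k) := by
      rw [← pow_add]; congr 1; omega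
    have h3 : r - k + 1 ≤ l ^ (r - k) := by
      calc r - k + 1 ≤ 2 ^ (r - k) := Nat.succ_le_of_lt Nat.lt_two_pow_self
      _ ≤ l ^ (r - k) := Nat.pow_le_pow_left hl _
    have h4 : r ≤ k * (r - k + 1) := by nlinarith [Nat.sub_add_cancel hkr]
    calc r * l ^ k ≤ k * (r - k + 1) * l ^ k := Nat.mul_le_mul_right _ h4
    _ ≤ k * l ^ (r - k) * l ^ k := Nat.mul_le_mul_right _ (Nat.mul_le_mul_left _ h3)
    _ = k * l ^ r := by rw [hsplit]; ring
  have hfin : r * l ^ k ≤ r * z := by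
    calc r * l ^ k ≤ z * r := le_trans h2 h1
    _ = r * z := Nat.mul_comm _ _
  exact Nat.le_of_mul_le_mul_left hfin (by omega)
end
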